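/- Let R = ℚ[a, c][z]/(z² + c). For an integer N, write the product P_N = ∏_{k=0}^{3} (4a + (4N − 2k)z) · ∏_{k=0}^{5} (6a + (6N − 2k)z) in R as q₀(a,c) + q₁(a,c)·z with q₀, q₁ ∈ ℚ[a,c]. Then for N = 2, the quotient ring ℚ[a, c]/(q₀, q₁), graded with deg a = 1 and deg c = 2, is a finite-dimensional ℚ-vector space of total dimension 45. -/

import Mathlib

open MvPolynomial

noncomputable section

/-- The variable `a`, of weighted degree 1. -/
def a : MvPolynomial (Fin 2) ℚ := X 0

/-- The variable `c`, of weighted degree 2. -/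
def c : MvPolynomial (Fin 2) ℚ := X 1

/-- The ring `ℚ[a,c][z]`; the class `z` is `Polynomial.X`. -/
abbrev S : Type := Polynomial (MvPolynomial (Fin 2) ℚ)

/-- The ideal `(z² + c)`, so that `S ⧸ Irel` is `ℚ[a,c][z]/(z² + c)`. -/
def Irel : Ideal S := Ideal.span {Polynomial.X ^ 2 + Polynomial.C c}

/-- The product `∏_{k=0}^{3} (4a + (4N − 2k)z) · ∏_{k=0}^{5} (6a + (6N − 2k)z)`,
computed in `ℚ[a,c][z]`. -/
def prodP (N : ℤ) : S :=
  (∏ k ∈ Finset.range 4,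
    (Polynomial.C (4 * a) + Polynomial.C (C ((4 * N - 2 * (k : ℤ) : ℤ) : ℚ)) * Polynomial.X)) *
  (∏ k ∈ Finset.range 6,
    (Polynomial.C (6 * a) + Polynomial.C (C ((6 * N - 2 * (k : ℤ) : ℤ) : ℚ)) * Polynomial.X))

end

-- ===== auxiliary development =====
noncomputable section
abbrev P2 : Type := MvPolynomial (Fin 2) ℚ

def QA : P2 := (11943936)*a^10*c^0 + (-754790400)*a^8*c^1 + (4437762048)*a^6*c^2 + (-4921159680)*a^4*c^3 + (1004322816)*a^2*c^4 + (-17694720)*a^0*c^5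
def QB : P2 := (143327232)*a^9*c^0 + (-2292572160)*a^7*c^1 + (5705957376)*a^5*c^2 + (-2802032640)*a^3*c^3 + (203784192)*a^1*c^4
def Wexpr : S :=
  Polynomial.C ((17694720)*a^0*c^0 : P2) * Polynomial.X^8 +
  Polynomial.C ((203784192)*a^1*c^0 : P2) * Polynomial.X^7 +
  Polynomial.C ((1004322816)*a^2*c^0 + (-17694720)*a^0*c^1 : P2) * Polynomial.X^6 +
  Polynomial.C ((2802032640)*a^3*c^0 + (-203784192)*a^1*c^1 : P2) * Polynomial.X^5 +
  Polynomial.C ((4921159680)*a^4*c^0 + (-1004322816)*a^2*c^1 + (17694720)*a^0*c^2 : P2) * Polynomial.X^4 +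
  Polynomial.C ((5705957376)*a^5*c^0 + (-2802032640)*a^3*c^1 + (203784192)*a^1*c^2 : P2) * Polynomial.X^3 +
  Polynomial.C ((4437762048)*a^6*c^0 + (-4921159680)*a^4*c^1 + (1004322816)*a^2*c^2 + (-17694720)*a^0*c^3 : P2) * Polynomial.X^2 +
  Polynomial.C ((2292572160)*a^7*c^0 + (-5705957376)*a^5*c^1 + (2802032640)*a^3*c^2 + (-203784192)*a^1*c^3 : P2) * Polynomial.X^1 +
  Polynomial.C ((754790400)*a^8*c^0 + (-4437762048)*a^6*c^1 + (4921159680)*a^4*c^2 + (-1004322816)*a^2*c^3 + (17694720)*a^0*c^4 : P2)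

set_option maxHeartbeats 1000000 in
lemma prod_id : prodP 2 = (Polynomial.X^2 + Polynomial.C c) * Wexpr
    + (Polynomial.C QA + Polynomial.C QB * Polynomial.X) := by
  unfold prodP Wexpr QA QB
  norm_num [Finset.prod_range_succ]
  simp only [map_mul, map_add, map_sub, map_neg, map_pow, map_ofNat, Polynomial.C_1, map_one]
  ring

lemma extract (q₀ q₁ : P2)
    (h : Ideal.Quotient.mk Irel (prodP 2) =
      Ideal.Quotient.mk Irel (Polynomial.C q₀ + Polynomial.C q₁ * Polynomial.X)) :
    q₀ = QA ∧ q₁ = QB := by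
  have h2 : Ideal.Quotient.mk Irel (Polynomial.C QA + Polynomial.C QB * Polynomial.X) =
      Ideal.Quotient.mk Irel (Polynomial.C q₀ + Polynomial.C q₁ * Polynomial.X) := by
    rw [← h, prod_id, Ideal.Quotient.eq]
    rw [show Polynomial.C QA + Polynomial.C QB * Polynomial.X
        - ((Polynomial.X^2 + Polynomial.C c) * Wexpr + (Polynomial.C QA + Polynomial.C QB * Polynomial.X))
        = (Polynomial.X^2 + Polynomial.C c) * (-Wexpr) by ring]
    exact Ideal.mul_mem_right _ _ (Ideal.subset_span rfl)
  rw [Ideal.Quotient.eq] at h2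
  rw [Irel, Ideal.mem_span_singleton] at h2
  have hz : Polynomial.C QA + Polynomial.C QB * Polynomial.X
      - (Polynomial.C q₀ + Polynomial.C q₁ * Polynomial.X) = 0 := by
    refine Polynomial.eq_zero_of_dvd_of_degree_lt h2 ?_
    rw [Polynomial.degree_X_pow_add_C (by norm_num)]
    rw [show Polynomial.C QA + Polynomial.C QB * Polynomial.X
        - (Polynomial.C q₀ + Polynomial.C q₁ * Polynomial.X)
        = Polynomial.C (QA - q₀) + Polynomial.C (QB - q₁) * Polynomial.X by
      simp only [map_sub]; ring]
    refine lt_of_le_of_lt (Polynomial.degree_add_le _ _) ?_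
    rw [max_lt_iff]
    constructor
    · exact lt_of_le_of_lt Polynomial.degree_C_le (by decide)
    · refine lt_of_le_of_lt (Polynomial.degree_mul_le _ _) ?_
      refine lt_of_le_of_lt (add_le_add Polynomial.degree_C_le Polynomial.degree_X_le) ?_
      decide
  have h0 := congrArg (fun p => Polynomial.coeff p 0) hz
  have h1 := congrArg (fun p => Polynomial.coeff p 1) hz
  simp [Polynomial.coeff_add, Polynomial.coeff_C] at h0 h1
  constructor
  · linear_combination (norm := ring_nf) -h0
  · linear_combination (norm := ring_nf) -h1

def Isp : Ideal P2 := Ideal.span {QA, QB}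

lemma Isp_pair {x : P2} (A B : P2) (h : A * QA + B * QB = x) : x ∈ Isp := by
  rw [Isp]; exact Ideal.mem_span_pair.mpr ⟨A, B, h⟩

def tgt (I J : ℕ) : Fin 2 →₀ ℕ := Finsupp.single 0 I + Finsupp.single 1 J

lemma pow_pow_eq_monomial (p q : ℕ) :
    (a^p * c^q : P2) = monomial (Finsupp.single 0 p + Finsupp.single 1 q) 1 := by
  rw [a, c, X_pow_eq_monomial, X_pow_eq_monomial, monomial_mul, one_mul]

lemma coeff_tgt (I J p q : ℕ) :
    coeff (tgt I J) (a^p * c^q : P2) = if p = I ∧ q = J then 1 else 0 := by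
  rw [pow_pow_eq_monomial, coeff_monomial]
  have key : (Finsupp.single (0 : Fin 2) p + Finsupp.single 1 q = tgt I J) ↔ (p = I ∧ q = J) := by
    constructor
    · intro h
      constructor
      · have h0 := DFunLike.congr_fun h 0
        simpa [tgt, Finsupp.single_apply] using h0
      · have h1 := DFunLike.congr_fun h 1
        simpa [tgt, Finsupp.single_apply] using h1
    · rintro ⟨rfl, rfl⟩; rfl
  simp only [key]

lemma vanish_pow (k : Fin 2) (n I J : ℕ) (h : tgt I J k < n) (w : P2) :
    coeff (tgt I J) ((X k : P2)^n * w) = 0 := by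
  rw [X_pow_eq_monomial, coeff_monomial_mul', if_neg]
  rw [Finsupp.single_le_iff]
  omega

lemma tgt_apply0 (I J : ℕ) : tgt I J 0 = I := by simp [tgt]
lemma tgt_apply1 (I J : ℕ) : tgt I J 1 = J := by simp [tgt]

def Rsoc : P2 := (438555419396 : P2) * (a^0*c^8) + (58754649276 : P2) * (a^2*c^7) + (16401517956 : P2) * (a^4*c^6) + (8290200636 : P2) * (a^6*c^5) + (7289030916 : P2) * (a^8*c^4) + (11291814396 : P2) * (a^10*c^3) + (32898684276 : P2) * (a^12*c^2) + (212356969056 : P2) * (a^14*c^1) + (5430036927411 : P2) * (a^16*c^0)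

def UA : P2 := (64856013538633629696)*a^9*c^0 + (-4096003366407760809984)*a^7*c^1 + (23937319733865977585664)*a^5*c^2 + (-25804385832536758849536)*a^3*c^3 + (4546028063159255531520)*a^1*c^4
def VA : P2 := (-142795696296531787776)*a^8*c^0 + (1673389311031946133504)*a^6*c^1 + (-2099482832830926864384)*a^4*c^2 + (439411566712214716416)*a^2*c^3 + (-7760115350694789120)*a^0*c^4
lemma certA : QA * Rsoc = a^17 * UA + c^9 * VA := by
  unfold QA Rsoc UA VA; ring

def UB : P2 := (778272162463603556352)*a^8*c^0 + (-12418314950983693344768)*a^6*c^1 + (30501430860027125956608)*a^4*c^2 + (-14077245076250996662272)*a^2*c^3 + (674400436666564608000)*a^0*c^4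
def VB : P2 := (-714436597533841293312)*a^7*c^0 + (2341088455148512247808)*a^5*c^1 + (-1216873330867528040448)*a^3*c^2 + (89370661788834988032)*a^1*c^3
lemma certB : QB * Rsoc = a^17 * UB + c^9 * VB := by
  unfold QB Rsoc UB VB; ring

lemma psi_zero (I J : ℕ) (hI : I ≤ 16) (hJ : J ≤ 8) (w : P2) (hw : w ∈ Isp) :
    coeff (tgt I J) (w * Rsoc) = 0 := by
  rw [Isp, Ideal.mem_span_pair] at hw
  obtain ⟨A, B, rfl⟩ := hw
  rw [show (A * QA + B * QB) * Rsoc = a^17 * (A * UA + B * UB) + c^9 * (A * VA + B * VB) by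
    linear_combination A * certA + B * certB]
  rw [coeff_add]
  rw [show (a : P2) = X 0 from rfl, show (c : P2) = X 1 from rfl]
  rw [vanish_pow 0 17 I J (by rw [tgt_apply0]; omega), vanish_pow 1 9 I J (by rw [tgt_apply1]; omega)]
  norm_num

def monoN : ℕ → P2 := fun n =>
  match n with
  | 0 => a^0*c^0
  | 1 => a^0*c^1
  | 2 => a^0*c^2
  | 3 => a^0*c^3
  | 4 => a^0*c^4
  | 5 => a^0*c^5
  | 6 => a^0*c^6
  | 7 => a^0*c^7
  | 8 => a^0*c^8
  | 9 => a^1*c^0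
  | 10 => a^1*c^1
  | 11 => a^1*c^2
  | 12 => a^1*c^3
  | 13 => a^1*c^4
  | 14 => a^1*c^5
  | 15 => a^1*c^6
  | 16 => a^1*c^7
  | 17 => a^2*c^0
  | 18 => a^2*c^1
  | 19 => a^2*c^2
  | 20 => a^2*c^3
  | 21 => a^2*c^4
  | 22 => a^2*c^5
  | 23 => a^2*c^6
  | 24 => a^3*c^0
  | 25 => a^3*c^1
  | 26 => a^3*c^2
  | 27 => a^3*c^3
  | 28 => a^3*c^4
  | 29 => a^3*c^5
  | 30 => a^4*c^0
  | 31 => a^4*c^1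
  | 32 => a^4*c^2
  | 33 => a^4*c^3
  | 34 => a^4*c^4
  | 35 => a^5*c^0
  | 36 => a^5*c^1
  | 37 => a^5*c^2
  | 38 => a^5*c^3
  | 39 => a^6*c^0
  | 40 => a^6*c^1
  | 41 => a^6*c^2
  | 42 => a^7*c^0
  | 43 => a^7*c^1
  | 44 => a^8*c^0
  | _ => 0

def stdV : Fin 45 → (P2 ⧸ Isp) := fun i => Ideal.Quotient.mk Isp (monoN i.val)

lemma mk_num (q : ℚ) (x : P2) :
    q • Ideal.Quotient.mk Isp x = Ideal.Quotient.mk Isp (C q * x) := by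
  rw [← smul_eq_C_mul, ← Ideal.Quotient.mkₐ_eq_mk ℚ Isp, map_smul]

lemma mk_smul (q : ℚ) (x : P2) :
    Ideal.Quotient.mk Isp (q • x) = q • Ideal.Quotient.mk Isp x := by
  rw [smul_eq_C_mul, ← mk_num]

lemma red0 : (143327232 : P2) * (a^9*c^0) = (0) * QA + ((1)*a^0*c^0) * QB + ((2292572160)*a^7*c^1 + (-5705957376)*a^5*c^2 + (2802032640)*a^3*c^3 + (-203784192)*a^1*c^4) := by
  unfold QA QB; ring

lemma red1 : (6764912640 : P2) * (a^8*c^1) = ((-12)*a^0*c^0) * QA + ((1)*a^1*c^0) * QB + ((47547187200)*a^6*c^2 + (-56251883520)*a^4*c^3 + (11848089600)*a^2*c^4 + (-212336640)*a^0*c^5) := by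
  unfold QA QB; ring

lemma red2 : (13102580736000 : P2) * (a^7*c^2) = ((-2592)*a^1*c^0) * QA + ((216)*a^2*c^0 + (-10195)*a^0*c^1) * QB + ((46021828608000)*a^5*c^3 + (-26007535411200)*a^3*c^4 + (2031715123200)*a^1*c^5) := by
  unfold QA QB; ring

lemma red3 : (15656005306368000 : P2) * (a^6*c^3) = ((-880848)*a^2*c^0 + (7898450)*a^0*c^1) * QA + ((73404)*a^3*c^0 + (-4122805)*a^1*c^1) * QB + ((28186996665139200)*a^4*c^4 + (-7108017419059200)*a^2*c^5 + (139760861184000)*a^0*c^6) := by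
  unfold QA QB; ring

lemma red4 : (296653049196134400 : P2) * (a^5*c^4) = ((-9748944)*a^3*c^0 + (121695538)*a^1*c^1) * QA + ((812412)*a^4*c^0 + (-48486389)*a^2*c^1 + (134824230)*a^0*c^2) * QB + ((265268542475059200)*a^3*c^5 + (-25321678302412800)*a^1*c^6) := by
  unfold QA QB; ring

lemma red5 : (2409093798729169305600 : P2) * (a^4*c^5) = ((-87366101040)*a^4*c^0 + (1240159635774)*a^2*c^1 + (-1341204830350)*a^0*c^2) * QA + ((7280508420)*a^5*c^0 + (-446979892527)*a^3*c^1 + (1908317682965)*a^1*c^2) * QB + ((980061912457902489600)*a^2*c^6 + (-23732243935690752000)*a^0*c^7) := by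
  unfold QA QB; ring

lemma red6 : (13002213793686198681600 : P2) * (a^3*c^6) = ((-967459068720)*a^5*c^0 + (14609759703390)*a^3*c^1 + (-25795819983766)*a^1*c^2) * QA + ((80621589060)*a^6*c^0 + (-5022744329295)*a^4*c^1 + (25492266289193)*a^2*c^2 + (-12124462290360)*a^0*c^3) * QB + ((2014323939492338073600)*a^1*c^7) := by
  unfold QA QB; ring

lemma red7 : (1329883381772893185638400 : P2) * (a^2*c^7) = ((-392832578207664)*a^6*c^0 + (6123691350022446)*a^4*c^1 + (-13192072505364646)*a^2*c^2 + (2939230187013120)*a^0*c^3) * QA + ((32736048183972)*a^7*c^0 + (-2055418775629623)*a^5*c^1 + (11330574376216193)*a^3*c^2 + (-9105135032860920)*a^1*c^3) * QB + ((52008855174744794726400)*a^0*c^8) := by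
  unfold QA QB; ring

lemma red8 : (333037252674846720000 : P2) * (a^1*c^8) = ((-849427876224)*a^7*c^0 + (13455318746016)*a^5*c^1 + (-31756578701246)*a^3*c^2 + (12060659934214)*a^1*c^3) * QA + ((70785656352)*a^8*c^0 + (-4462293999708)*a^6*c^1 + (25611126168943)*a^4*c^2 + (-25326154760657)*a^2*c^3 + (2681499717240)*a^0*c^4) * QB + (0) := by
  unfold QA QB; ring

lemma red9 : (1332149010699386880000 : P2) * (a^0*c^9) = ((-86880590838576)*a^8*c^0 + (1386289516954734)*a^6*c^1 + (-3404955826959904)*a^4*c^2 + (1571480297756786)*a^2*c^3 + (-75285113904000)*a^0*c^4) * QA + ((7240049236548)*a^9*c^0 + (-457247746628667)*a^7*c^1 + (2672186648674382)*a^5*c^2 + (-2880612201598843)*a^3*c^3 + (507485200094760)*a^1*c^4) * QB + (0) := by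
  unfold QA QB; ring

set_option maxHeartbeats 2000000 in
lemma mem_std (i j : ℕ) (hij : i + j ≤ 8) :
    Ideal.Quotient.mk Isp (a^i*c^j) ∈ Submodule.span ℚ (Set.range stdV) := by
  have hi8 : i ≤ 8 := by omega
  have hj8 : j ≤ 8 := by omega
  interval_cases i <;> interval_cases j
  · have hk : (0:ℕ) < 45 := by omega
    exact Submodule.subset_span ⟨⟨0, hk⟩, rfl⟩
  · have hk : (1:ℕ) < 45 := by omega
    exact Submodule.subset_span ⟨⟨1, hk⟩, rfl⟩
  · have hk : (2:ℕ) < 45 := by omega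
    exact Submodule.subset_span ⟨⟨2, hk⟩, rfl⟩
  · have hk : (3:ℕ) < 45 := by omega
    exact Submodule.subset_span ⟨⟨3, hk⟩, rfl⟩
  · have hk : (4:ℕ) < 45 := by omega
    exact Submodule.subset_span ⟨⟨4, hk⟩, rfl⟩
  · have hk : (5:ℕ) < 45 := by omega
    exact Submodule.subset_span ⟨⟨5, hk⟩, rfl⟩
  · have hk : (6:ℕ) < 45 := by omega
    exact Submodule.subset_span ⟨⟨6, hk⟩, rfl⟩
  · have hk : (7:ℕ) < 45 := by omega
    exact Submodule.subset_span ⟨⟨7, hk⟩, rfl⟩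
  · have hk : (8:ℕ) < 45 := by omega
    exact Submodule.subset_span ⟨⟨8, hk⟩, rfl⟩
  · have hk : (9:ℕ) < 45 := by omega
    exact Submodule.subset_span ⟨⟨9, hk⟩, rfl⟩
  · have hk : (10:ℕ) < 45 := by omega
    exact Submodule.subset_span ⟨⟨10, hk⟩, rfl⟩
  · have hk : (11:ℕ) < 45 := by omega
    exact Submodule.subset_span ⟨⟨11, hk⟩, rfl⟩
  · have hk : (12:ℕ) < 45 := by omega
    exact Submodule.subset_span ⟨⟨12, hk⟩, rfl⟩
  · have hk : (13:ℕ) < 45 := by omega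
    exact Submodule.subset_span ⟨⟨13, hk⟩, rfl⟩
  · have hk : (14:ℕ) < 45 := by omega
    exact Submodule.subset_span ⟨⟨14, hk⟩, rfl⟩
  · have hk : (15:ℕ) < 45 := by omega
    exact Submodule.subset_span ⟨⟨15, hk⟩, rfl⟩
  · have hk : (16:ℕ) < 45 := by omega
    exact Submodule.subset_span ⟨⟨16, hk⟩, rfl⟩
  · exact absurd hij (by omega)
  · have hk : (17:ℕ) < 45 := by omega
    exact Submodule.subset_span ⟨⟨17, hk⟩, rfl⟩
  · have hk : (18:ℕ) < 45 := by omega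
    exact Submodule.subset_span ⟨⟨18, hk⟩, rfl⟩
  · have hk : (19:ℕ) < 45 := by omega
    exact Submodule.subset_span ⟨⟨19, hk⟩, rfl⟩
  · have hk : (20:ℕ) < 45 := by omega
    exact Submodule.subset_span ⟨⟨20, hk⟩, rfl⟩
  · have hk : (21:ℕ) < 45 := by omega
    exact Submodule.subset_span ⟨⟨21, hk⟩, rfl⟩
  · have hk : (22:ℕ) < 45 := by omega
    exact Submodule.subset_span ⟨⟨22, hk⟩, rfl⟩
  · have hk : (23:ℕ) < 45 := by omega
    exact Submodule.subset_span ⟨⟨23, hk⟩, rfl⟩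
  · exact absurd hij (by omega)
  · exact absurd hij (by omega)
  · have hk : (24:ℕ) < 45 := by omega
    exact Submodule.subset_span ⟨⟨24, hk⟩, rfl⟩
  · have hk : (25:ℕ) < 45 := by omega
    exact Submodule.subset_span ⟨⟨25, hk⟩, rfl⟩
  · have hk : (26:ℕ) < 45 := by omega
    exact Submodule.subset_span ⟨⟨26, hk⟩, rfl⟩
  · have hk : (27:ℕ) < 45 := by omega
    exact Submodule.subset_span ⟨⟨27, hk⟩, rfl⟩
  · have hk : (28:ℕ) < 45 := by omega
    exact Submodule.subset_span ⟨⟨28, hk⟩, rfl⟩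
  · have hk : (29:ℕ) < 45 := by omega
    exact Submodule.subset_span ⟨⟨29, hk⟩, rfl⟩
  · exact absurd hij (by omega)
  · exact absurd hij (by omega)
  · exact absurd hij (by omega)
  · have hk : (30:ℕ) < 45 := by omega
    exact Submodule.subset_span ⟨⟨30, hk⟩, rfl⟩
  · have hk : (31:ℕ) < 45 := by omega
    exact Submodule.subset_span ⟨⟨31, hk⟩, rfl⟩
  · have hk : (32:ℕ) < 45 := by omega
    exact Submodule.subset_span ⟨⟨32, hk⟩, rfl⟩
  · have hk : (33:ℕ) < 45 := by omega
    exact Submodule.subset_span ⟨⟨33, hk⟩, rfl⟩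
  · have hk : (34:ℕ) < 45 := by omega
    exact Submodule.subset_span ⟨⟨34, hk⟩, rfl⟩
  · exact absurd hij (by omega)
  · exact absurd hij (by omega)
  · exact absurd hij (by omega)
  · exact absurd hij (by omega)
  · have hk : (35:ℕ) < 45 := by omega
    exact Submodule.subset_span ⟨⟨35, hk⟩, rfl⟩
  · have hk : (36:ℕ) < 45 := by omega
    exact Submodule.subset_span ⟨⟨36, hk⟩, rfl⟩
  · have hk : (37:ℕ) < 45 := by omega
    exact Submodule.subset_span ⟨⟨37, hk⟩, rfl⟩
  · have hk : (38:ℕ) < 45 := by omega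
    exact Submodule.subset_span ⟨⟨38, hk⟩, rfl⟩
  · exact absurd hij (by omega)
  · exact absurd hij (by omega)
  · exact absurd hij (by omega)
  · exact absurd hij (by omega)
  · exact absurd hij (by omega)
  · have hk : (39:ℕ) < 45 := by omega
    exact Submodule.subset_span ⟨⟨39, hk⟩, rfl⟩
  · have hk : (40:ℕ) < 45 := by omega
    exact Submodule.subset_span ⟨⟨40, hk⟩, rfl⟩
  · have hk : (41:ℕ) < 45 := by omega
    exact Submodule.subset_span ⟨⟨41, hk⟩, rfl⟩
  · exact absurd hij (by omega)
  · exact absurd hij (by omega)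
  · exact absurd hij (by omega)
  · exact absurd hij (by omega)
  · exact absurd hij (by omega)
  · exact absurd hij (by omega)
  · have hk : (42:ℕ) < 45 := by omega
    exact Submodule.subset_span ⟨⟨42, hk⟩, rfl⟩
  · have hk : (43:ℕ) < 45 := by omega
    exact Submodule.subset_span ⟨⟨43, hk⟩, rfl⟩
  · exact absurd hij (by omega)
  · exact absurd hij (by omega)
  · exact absurd hij (by omega)
  · exact absurd hij (by omega)
  · exact absurd hij (by omega)
  · exact absurd hij (by omega)
  · exact absurd hij (by omega)
  · have hk : (44:ℕ) < 45 := by omega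
    exact Submodule.subset_span ⟨⟨44, hk⟩, rfl⟩
  · exact absurd hij (by omega)
  · exact absurd hij (by omega)
  · exact absurd hij (by omega)
  · exact absurd hij (by omega)
  · exact absurd hij (by omega)
  · exact absurd hij (by omega)
  · exact absurd hij (by omega)
  · exact absurd hij (by omega)

set_option maxHeartbeats 2000000 in
lemma key_span : ∀ n i j : ℕ, i + j ≤ n →
    Ideal.Quotient.mk Isp (a^i*c^j) ∈ Submodule.span ℚ (Set.range stdV) := by
  intro n
  induction n with
  | zero => intro i j hij; exact mem_std i j (by omega)
  | succ n ih =>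
    intro i j hij
    by_cases hsm : i + j ≤ 8
    · exact mem_std i j hsm
    · by_cases h9 : 9 ≤ j
      · obtain ⟨j', rfl⟩ := Nat.exists_eq_add_of_le h9
        refine (Submodule.smul_mem_iff _ (show (1332149010699386880000:ℚ) ≠ 0 by norm_num)).mp ?_
        rw [mk_num, show (C (1332149010699386880000:ℚ) : P2) = (1332149010699386880000:P2) from by simp only [map_ofNat]]
        rw [Ideal.Quotient.eq_zero_iff_mem.mpr (Isp_pair
          (a^i*c^j' * ((-86880590838576)*a^8*c^0 + (1386289516954734)*a^6*c^1 + (-3404955826959904)*a^4*c^2 + (1571480297756786)*a^2*c^3 + (-75285113904000)*a^0*c^4)) (a^i*c^j' * ((7240049236548)*a^9*c^0 + (-457247746628667)*a^7*c^1 + (2672186648674382)*a^5*c^2 + (-2880612201598843)*a^3*c^3 + (507485200094760)*a^1*c^4))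
           (by linear_combination (-(a^i*c^j' : P2)) * red9))]
        exact Submodule.zero_mem _
      · interval_cases j
        -- j = 0
        · obtain ⟨i', rfl⟩ : ∃ i', i = i' + 9 := ⟨i - 9, by omega⟩
          refine (Submodule.smul_mem_iff _ (show (143327232:ℚ) ≠ 0 by norm_num)).mp ?_
          rw [mk_num, show (C (143327232:ℚ) : P2) = (143327232:P2) from by simp only [map_ofNat]]
          rw [show Ideal.Quotient.mk Isp ((143327232:P2) * (a^(i'+9)*c^0))
              = Ideal.Quotient.mk Isp ((2292572160:ℚ) • (a^(i'+7)*c^1) + (-5705957376:ℚ) • (a^(i'+5)*c^2) + (2802032640:ℚ) • (a^(i'+3)*c^3) + (-203784192:ℚ) • (a^(i'+1)*c^4)) from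
            Ideal.Quotient.eq.mpr (Isp_pair
              (a^i' * (0)) (a^i' * ((1)*a^0*c^0))
               (by simp only [smul_eq_C_mul, map_neg, map_ofNat, map_one]
                   linear_combination (-(a^i' : P2)) * red0))]
          simp only [map_add, mk_smul]
          exact (add_mem (add_mem (add_mem (Submodule.smul_mem _ _ (ih _ _ (by omega))) (Submodule.smul_mem _ _ (ih _ _ (by omega)))) (Submodule.smul_mem _ _ (ih _ _ (by omega)))) (Submodule.smul_mem _ _ (ih _ _ (by omega))))
        -- j = 1
        · obtain ⟨i', rfl⟩ : ∃ i', i = i' + 8 := ⟨i - 8, by omega⟩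
          refine (Submodule.smul_mem_iff _ (show (6764912640:ℚ) ≠ 0 by norm_num)).mp ?_
          rw [mk_num, show (C (6764912640:ℚ) : P2) = (6764912640:P2) from by simp only [map_ofNat]]
          rw [show Ideal.Quotient.mk Isp ((6764912640:P2) * (a^(i'+8)*c^1))
              = Ideal.Quotient.mk Isp ((47547187200:ℚ) • (a^(i'+6)*c^2) + (-56251883520:ℚ) • (a^(i'+4)*c^3) + (11848089600:ℚ) • (a^(i'+2)*c^4) + (-212336640:ℚ) • (a^(i'+0)*c^5)) from
            Ideal.Quotient.eq.mpr (Isp_pair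
              (a^i' * ((-12)*a^0*c^0)) (a^i' * ((1)*a^1*c^0))
               (by simp only [smul_eq_C_mul, map_neg, map_ofNat, map_one]
                   linear_combination (-(a^i' : P2)) * red1))]
          simp only [map_add, mk_smul]
          exact (add_mem (add_mem (add_mem (Submodule.smul_mem _ _ (ih _ _ (by omega))) (Submodule.smul_mem _ _ (ih _ _ (by omega)))) (Submodule.smul_mem _ _ (ih _ _ (by omega)))) (Submodule.smul_mem _ _ (ih _ _ (by omega))))
        -- j = 2
        · obtain ⟨i', rfl⟩ : ∃ i', i = i' + 7 := ⟨i - 7, by omega⟩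
          refine (Submodule.smul_mem_iff _ (show (13102580736000:ℚ) ≠ 0 by norm_num)).mp ?_
          rw [mk_num, show (C (13102580736000:ℚ) : P2) = (13102580736000:P2) from by simp only [map_ofNat]]
          rw [show Ideal.Quotient.mk Isp ((13102580736000:P2) * (a^(i'+7)*c^2))
              = Ideal.Quotient.mk Isp ((46021828608000:ℚ) • (a^(i'+5)*c^3) + (-26007535411200:ℚ) • (a^(i'+3)*c^4) + (2031715123200:ℚ) • (a^(i'+1)*c^5)) from
            Ideal.Quotient.eq.mpr (Isp_pair
              (a^i' * ((-2592)*a^1*c^0)) (a^i' * ((216)*a^2*c^0 + (-10195)*a^0*c^1))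
               (by simp only [smul_eq_C_mul, map_neg, map_ofNat, map_one]
                   linear_combination (-(a^i' : P2)) * red2))]
          simp only [map_add, mk_smul]
          exact (add_mem (add_mem (Submodule.smul_mem _ _ (ih _ _ (by omega))) (Submodule.smul_mem _ _ (ih _ _ (by omega)))) (Submodule.smul_mem _ _ (ih _ _ (by omega))))
        -- j = 3
        · obtain ⟨i', rfl⟩ : ∃ i', i = i' + 6 := ⟨i - 6, by omega⟩
          refine (Submodule.smul_mem_iff _ (show (15656005306368000:ℚ) ≠ 0 by norm_num)).mp ?_
          rw [mk_num, show (C (15656005306368000:ℚ) : P2) = (15656005306368000:P2) from by simp only [map_ofNat]]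
          rw [show Ideal.Quotient.mk Isp ((15656005306368000:P2) * (a^(i'+6)*c^3))
              = Ideal.Quotient.mk Isp ((28186996665139200:ℚ) • (a^(i'+4)*c^4) + (-7108017419059200:ℚ) • (a^(i'+2)*c^5) + (139760861184000:ℚ) • (a^(i'+0)*c^6)) from
            Ideal.Quotient.eq.mpr (Isp_pair
              (a^i' * ((-880848)*a^2*c^0 + (7898450)*a^0*c^1)) (a^i' * ((73404)*a^3*c^0 + (-4122805)*a^1*c^1))
               (by simp only [smul_eq_C_mul, map_neg, map_ofNat, map_one]
                   linear_combination (-(a^i' : P2)) * red3))]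
          simp only [map_add, mk_smul]
          exact (add_mem (add_mem (Submodule.smul_mem _ _ (ih _ _ (by omega))) (Submodule.smul_mem _ _ (ih _ _ (by omega)))) (Submodule.smul_mem _ _ (ih _ _ (by omega))))
        -- j = 4
        · obtain ⟨i', rfl⟩ : ∃ i', i = i' + 5 := ⟨i - 5, by omega⟩
          refine (Submodule.smul_mem_iff _ (show (296653049196134400:ℚ) ≠ 0 by norm_num)).mp ?_
          rw [mk_num, show (C (296653049196134400:ℚ) : P2) = (296653049196134400:P2) from by simp only [map_ofNat]]
          rw [show Ideal.Quotient.mk Isp ((296653049196134400:P2) * (a^(i'+5)*c^4))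
              = Ideal.Quotient.mk Isp ((265268542475059200:ℚ) • (a^(i'+3)*c^5) + (-25321678302412800:ℚ) • (a^(i'+1)*c^6)) from
            Ideal.Quotient.eq.mpr (Isp_pair
              (a^i' * ((-9748944)*a^3*c^0 + (121695538)*a^1*c^1)) (a^i' * ((812412)*a^4*c^0 + (-48486389)*a^2*c^1 + (134824230)*a^0*c^2))
               (by simp only [smul_eq_C_mul, map_neg, map_ofNat, map_one]
                   linear_combination (-(a^i' : P2)) * red4))]
          simp only [map_add, mk_smul]
          exact (add_mem (Submodule.smul_mem _ _ (ih _ _ (by omega))) (Submodule.smul_mem _ _ (ih _ _ (by omega))))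
        -- j = 5
        · obtain ⟨i', rfl⟩ : ∃ i', i = i' + 4 := ⟨i - 4, by omega⟩
          refine (Submodule.smul_mem_iff _ (show (2409093798729169305600:ℚ) ≠ 0 by norm_num)).mp ?_
          rw [mk_num, show (C (2409093798729169305600:ℚ) : P2) = (2409093798729169305600:P2) from by simp only [map_ofNat]]
          rw [show Ideal.Quotient.mk Isp ((2409093798729169305600:P2) * (a^(i'+4)*c^5))
              = Ideal.Quotient.mk Isp ((980061912457902489600:ℚ) • (a^(i'+2)*c^6) + (-23732243935690752000:ℚ) • (a^(i'+0)*c^7)) from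
            Ideal.Quotient.eq.mpr (Isp_pair
              (a^i' * ((-87366101040)*a^4*c^0 + (1240159635774)*a^2*c^1 + (-1341204830350)*a^0*c^2)) (a^i' * ((7280508420)*a^5*c^0 + (-446979892527)*a^3*c^1 + (1908317682965)*a^1*c^2))
               (by simp only [smul_eq_C_mul, map_neg, map_ofNat, map_one]
                   linear_combination (-(a^i' : P2)) * red5))]
          simp only [map_add, mk_smul]
          exact (add_mem (Submodule.smul_mem _ _ (ih _ _ (by omega))) (Submodule.smul_mem _ _ (ih _ _ (by omega))))
        -- j = 6
        · obtain ⟨i', rfl⟩ : ∃ i', i = i' + 3 := ⟨i - 3, by omega⟩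
          refine (Submodule.smul_mem_iff _ (show (13002213793686198681600:ℚ) ≠ 0 by norm_num)).mp ?_
          rw [mk_num, show (C (13002213793686198681600:ℚ) : P2) = (13002213793686198681600:P2) from by simp only [map_ofNat]]
          rw [show Ideal.Quotient.mk Isp ((13002213793686198681600:P2) * (a^(i'+3)*c^6))
              = Ideal.Quotient.mk Isp ((2014323939492338073600:ℚ) • (a^(i'+1)*c^7)) from
            Ideal.Quotient.eq.mpr (Isp_pair
              (a^i' * ((-967459068720)*a^5*c^0 + (14609759703390)*a^3*c^1 + (-25795819983766)*a^1*c^2)) (a^i' * ((80621589060)*a^6*c^0 + (-5022744329295)*a^4*c^1 + (25492266289193)*a^2*c^2 + (-12124462290360)*a^0*c^3))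
               (by simp only [smul_eq_C_mul, map_neg, map_ofNat, map_one]
                   linear_combination (-(a^i' : P2)) * red6))]
          simp only [map_add, mk_smul]
          exact (Submodule.smul_mem _ _ (ih _ _ (by omega)))
        -- j = 7
        · obtain ⟨i', rfl⟩ : ∃ i', i = i' + 2 := ⟨i - 2, by omega⟩
          refine (Submodule.smul_mem_iff _ (show (1329883381772893185638400:ℚ) ≠ 0 by norm_num)).mp ?_
          rw [mk_num, show (C (1329883381772893185638400:ℚ) : P2) = (1329883381772893185638400:P2) from by simp only [map_ofNat]]
          rw [show Ideal.Quotient.mk Isp ((1329883381772893185638400:P2) * (a^(i'+2)*c^7))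
              = Ideal.Quotient.mk Isp ((52008855174744794726400:ℚ) • (a^(i'+0)*c^8)) from
            Ideal.Quotient.eq.mpr (Isp_pair
              (a^i' * ((-392832578207664)*a^6*c^0 + (6123691350022446)*a^4*c^1 + (-13192072505364646)*a^2*c^2 + (2939230187013120)*a^0*c^3)) (a^i' * ((32736048183972)*a^7*c^0 + (-2055418775629623)*a^5*c^1 + (11330574376216193)*a^3*c^2 + (-9105135032860920)*a^1*c^3))
               (by simp only [smul_eq_C_mul, map_neg, map_ofNat, map_one]
                   linear_combination (-(a^i' : P2)) * red7))]
          simp only [map_add, mk_smul]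
          exact (Submodule.smul_mem _ _ (ih _ _ (by omega)))
        -- j = 8
        · obtain ⟨i', rfl⟩ : ∃ i', i = i' + 1 := ⟨i - 1, by omega⟩
          refine (Submodule.smul_mem_iff _ (show (333037252674846720000:ℚ) ≠ 0 by norm_num)).mp ?_
          rw [mk_num, show (C (333037252674846720000:ℚ) : P2) = (333037252674846720000:P2) from by simp only [map_ofNat]]
          rw [Ideal.Quotient.eq_zero_iff_mem.mpr (Isp_pair
            (a^i' * ((-849427876224)*a^7*c^0 + (13455318746016)*a^5*c^1 + (-31756578701246)*a^3*c^2 + (12060659934214)*a^1*c^3)) (a^i' * ((70785656352)*a^8*c^0 + (-4462293999708)*a^6*c^1 + (25611126168943)*a^4*c^2 + (-25326154760657)*a^2*c^3 + (2681499717240)*a^0*c^4))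
             (by linear_combination (-(a^i' : P2)) * red8))]
          exact Submodule.zero_mem _

lemma span_top : ⊤ ≤ Submodule.span ℚ (Set.range stdV) := by
  rintro x -
  obtain ⟨f, rfl⟩ := Ideal.Quotient.mk_surjective x
  induction f using MvPolynomial.induction_on' with
  | monomial m r =>
      rw [show (monomial m r : P2) = C r * (a^(m 0) * c^(m 1)) by
        rw [monomial_eq, Finsupp.prod_fintype _ _ (fun i => pow_zero _), Fin.prod_univ_two]; rfl]
      rw [← mk_num]
      exact Submodule.smul_mem _ _ (key_span (m 0 + m 1) (m 0) (m 1) le_rfl)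
  | add p q hp hq => rw [map_add]; exact add_mem hp hq

lemma monoR0 : monoN 0 * Rsoc = (438555419396 : ℚ) • (a^0*c^8) + (58754649276 : ℚ) • (a^2*c^7) + (16401517956 : ℚ) • (a^4*c^6) + (8290200636 : ℚ) • (a^6*c^5) + (7289030916 : ℚ) • (a^8*c^4) + (11291814396 : ℚ) • (a^10*c^3) + (32898684276 : ℚ) • (a^12*c^2) + (212356969056 : ℚ) • (a^14*c^1) + (5430036927411 : ℚ) • (a^16*c^0) := by
  rw [show monoN 0 = a^0*c^0 from rfl]
  simp only [smul_eq_C_mul, map_ofNat]; unfold Rsoc; ring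

lemma monoR1 : monoN 1 * Rsoc = (438555419396 : ℚ) • (a^0*c^9) + (58754649276 : ℚ) • (a^2*c^8) + (16401517956 : ℚ) • (a^4*c^7) + (8290200636 : ℚ) • (a^6*c^6) + (7289030916 : ℚ) • (a^8*c^5) + (11291814396 : ℚ) • (a^10*c^4) + (32898684276 : ℚ) • (a^12*c^3) + (212356969056 : ℚ) • (a^14*c^2) + (5430036927411 : ℚ) • (a^16*c^1) := by
  rw [show monoN 1 = a^0*c^1 from rfl]
  simp only [smul_eq_C_mul, map_ofNat]; unfold Rsoc; ring

lemma monoR2 : monoN 2 * Rsoc = (438555419396 : ℚ) • (a^0*c^10) + (58754649276 : ℚ) • (a^2*c^9) + (16401517956 : ℚ) • (a^4*c^8) + (8290200636 : ℚ) • (a^6*c^7) + (7289030916 : ℚ) • (a^8*c^6) + (11291814396 : ℚ) • (a^10*c^5) + (32898684276 : ℚ) • (a^12*c^4) + (212356969056 : ℚ) • (a^14*c^3) + (5430036927411 : ℚ) • (a^16*c^2) := by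
  rw [show monoN 2 = a^0*c^2 from rfl]
  simp only [smul_eq_C_mul, map_ofNat]; unfold Rsoc; ring

lemma monoR3 : monoN 3 * Rsoc = (438555419396 : ℚ) • (a^0*c^11) + (58754649276 : ℚ) • (a^2*c^10) + (16401517956 : ℚ) • (a^4*c^9) + (8290200636 : ℚ) • (a^6*c^8) + (7289030916 : ℚ) • (a^8*c^7) + (11291814396 : ℚ) • (a^10*c^6) + (32898684276 : ℚ) • (a^12*c^5) + (212356969056 : ℚ) • (a^14*c^4) + (5430036927411 : ℚ) • (a^16*c^3) := by
  rw [show monoN 3 = a^0*c^3 from rfl]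
  simp only [smul_eq_C_mul, map_ofNat]; unfold Rsoc; ring

lemma monoR4 : monoN 4 * Rsoc = (438555419396 : ℚ) • (a^0*c^12) + (58754649276 : ℚ) • (a^2*c^11) + (16401517956 : ℚ) • (a^4*c^10) + (8290200636 : ℚ) • (a^6*c^9) + (7289030916 : ℚ) • (a^8*c^8) + (11291814396 : ℚ) • (a^10*c^7) + (32898684276 : ℚ) • (a^12*c^6) + (212356969056 : ℚ) • (a^14*c^5) + (5430036927411 : ℚ) • (a^16*c^4) := by
  rw [show monoN 4 = a^0*c^4 from rfl]
  simp only [smul_eq_C_mul, map_ofNat]; unfold Rsoc; ring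

lemma monoR5 : monoN 5 * Rsoc = (438555419396 : ℚ) • (a^0*c^13) + (58754649276 : ℚ) • (a^2*c^12) + (16401517956 : ℚ) • (a^4*c^11) + (8290200636 : ℚ) • (a^6*c^10) + (7289030916 : ℚ) • (a^8*c^9) + (11291814396 : ℚ) • (a^10*c^8) + (32898684276 : ℚ) • (a^12*c^7) + (212356969056 : ℚ) • (a^14*c^6) + (5430036927411 : ℚ) • (a^16*c^5) := by
  rw [show monoN 5 = a^0*c^5 from rfl]
  simp only [smul_eq_C_mul, map_ofNat]; unfold Rsoc; ring

lemma monoR6 : monoN 6 * Rsoc = (438555419396 : ℚ) • (a^0*c^14) + (58754649276 : ℚ) • (a^2*c^13) + (16401517956 : ℚ) • (a^4*c^12) + (8290200636 : ℚ) • (a^6*c^11) + (7289030916 : ℚ) • (a^8*c^10) + (11291814396 : ℚ) • (a^10*c^9) + (32898684276 : ℚ) • (a^12*c^8) + (212356969056 : ℚ) • (a^14*c^7) + (5430036927411 : ℚ) • (a^16*c^6) := by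
  rw [show monoN 6 = a^0*c^6 from rfl]
  simp only [smul_eq_C_mul, map_ofNat]; unfold Rsoc; ring

lemma monoR7 : monoN 7 * Rsoc = (438555419396 : ℚ) • (a^0*c^15) + (58754649276 : ℚ) • (a^2*c^14) + (16401517956 : ℚ) • (a^4*c^13) + (8290200636 : ℚ) • (a^6*c^12) + (7289030916 : ℚ) • (a^8*c^11) + (11291814396 : ℚ) • (a^10*c^10) + (32898684276 : ℚ) • (a^12*c^9) + (212356969056 : ℚ) • (a^14*c^8) + (5430036927411 : ℚ) • (a^16*c^7) := by
  rw [show monoN 7 = a^0*c^7 from rfl]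
  simp only [smul_eq_C_mul, map_ofNat]; unfold Rsoc; ring

lemma monoR8 : monoN 8 * Rsoc = (438555419396 : ℚ) • (a^0*c^16) + (58754649276 : ℚ) • (a^2*c^15) + (16401517956 : ℚ) • (a^4*c^14) + (8290200636 : ℚ) • (a^6*c^13) + (7289030916 : ℚ) • (a^8*c^12) + (11291814396 : ℚ) • (a^10*c^11) + (32898684276 : ℚ) • (a^12*c^10) + (212356969056 : ℚ) • (a^14*c^9) + (5430036927411 : ℚ) • (a^16*c^8) := by
  rw [show monoN 8 = a^0*c^8 from rfl]
  simp only [smul_eq_C_mul, map_ofNat]; unfold Rsoc; ring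

lemma monoR9 : monoN 9 * Rsoc = (438555419396 : ℚ) • (a^1*c^8) + (58754649276 : ℚ) • (a^3*c^7) + (16401517956 : ℚ) • (a^5*c^6) + (8290200636 : ℚ) • (a^7*c^5) + (7289030916 : ℚ) • (a^9*c^4) + (11291814396 : ℚ) • (a^11*c^3) + (32898684276 : ℚ) • (a^13*c^2) + (212356969056 : ℚ) • (a^15*c^1) + (5430036927411 : ℚ) • (a^17*c^0) := by
  rw [show monoN 9 = a^1*c^0 from rfl]
  simp only [smul_eq_C_mul, map_ofNat]; unfold Rsoc; ring

lemma monoR10 : monoN 10 * Rsoc = (438555419396 : ℚ) • (a^1*c^9) + (58754649276 : ℚ) • (a^3*c^8) + (16401517956 : ℚ) • (a^5*c^7) + (8290200636 : ℚ) • (a^7*c^6) + (7289030916 : ℚ) • (a^9*c^5) + (11291814396 : ℚ) • (a^11*c^4) + (32898684276 : ℚ) • (a^13*c^3) + (212356969056 : ℚ) • (a^15*c^2) + (5430036927411 : ℚ) • (a^17*c^1) := by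
  rw [show monoN 10 = a^1*c^1 from rfl]
  simp only [smul_eq_C_mul, map_ofNat]; unfold Rsoc; ring

lemma monoR11 : monoN 11 * Rsoc = (438555419396 : ℚ) • (a^1*c^10) + (58754649276 : ℚ) • (a^3*c^9) + (16401517956 : ℚ) • (a^5*c^8) + (8290200636 : ℚ) • (a^7*c^7) + (7289030916 : ℚ) • (a^9*c^6) + (11291814396 : ℚ) • (a^11*c^5) + (32898684276 : ℚ) • (a^13*c^4) + (212356969056 : ℚ) • (a^15*c^3) + (5430036927411 : ℚ) • (a^17*c^2) := by
  rw [show monoN 11 = a^1*c^2 from rfl]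
  simp only [smul_eq_C_mul, map_ofNat]; unfold Rsoc; ring

lemma monoR12 : monoN 12 * Rsoc = (438555419396 : ℚ) • (a^1*c^11) + (58754649276 : ℚ) • (a^3*c^10) + (16401517956 : ℚ) • (a^5*c^9) + (8290200636 : ℚ) • (a^7*c^8) + (7289030916 : ℚ) • (a^9*c^7) + (11291814396 : ℚ) • (a^11*c^6) + (32898684276 : ℚ) • (a^13*c^5) + (212356969056 : ℚ) • (a^15*c^4) + (5430036927411 : ℚ) • (a^17*c^3) := by
  rw [show monoN 12 = a^1*c^3 from rfl]
  simp only [smul_eq_C_mul, map_ofNat]; unfold Rsoc; ring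

lemma monoR13 : monoN 13 * Rsoc = (438555419396 : ℚ) • (a^1*c^12) + (58754649276 : ℚ) • (a^3*c^11) + (16401517956 : ℚ) • (a^5*c^10) + (8290200636 : ℚ) • (a^7*c^9) + (7289030916 : ℚ) • (a^9*c^8) + (11291814396 : ℚ) • (a^11*c^7) + (32898684276 : ℚ) • (a^13*c^6) + (212356969056 : ℚ) • (a^15*c^5) + (5430036927411 : ℚ) • (a^17*c^4) := by
  rw [show monoN 13 = a^1*c^4 from rfl]
  simp only [smul_eq_C_mul, map_ofNat]; unfold Rsoc; ring

lemma monoR14 : monoN 14 * Rsoc = (438555419396 : ℚ) • (a^1*c^13) + (58754649276 : ℚ) • (a^3*c^12) + (16401517956 : ℚ) • (a^5*c^11) + (8290200636 : ℚ) • (a^7*c^10) + (7289030916 : ℚ) • (a^9*c^9) + (11291814396 : ℚ) • (a^11*c^8) + (32898684276 : ℚ) • (a^13*c^7) + (212356969056 : ℚ) • (a^15*c^6) + (5430036927411 : ℚ) • (a^17*c^5) := by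
  rw [show monoN 14 = a^1*c^5 from rfl]
  simp only [smul_eq_C_mul, map_ofNat]; unfold Rsoc; ring

lemma monoR15 : monoN 15 * Rsoc = (438555419396 : ℚ) • (a^1*c^14) + (58754649276 : ℚ) • (a^3*c^13) + (16401517956 : ℚ) • (a^5*c^12) + (8290200636 : ℚ) • (a^7*c^11) + (7289030916 : ℚ) • (a^9*c^10) + (11291814396 : ℚ) • (a^11*c^9) + (32898684276 : ℚ) • (a^13*c^8) + (212356969056 : ℚ) • (a^15*c^7) + (5430036927411 : ℚ) • (a^17*c^6) := by
  rw [show monoN 15 = a^1*c^6 from rfl]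
  simp only [smul_eq_C_mul, map_ofNat]; unfold Rsoc; ring

lemma monoR16 : monoN 16 * Rsoc = (438555419396 : ℚ) • (a^1*c^15) + (58754649276 : ℚ) • (a^3*c^14) + (16401517956 : ℚ) • (a^5*c^13) + (8290200636 : ℚ) • (a^7*c^12) + (7289030916 : ℚ) • (a^9*c^11) + (11291814396 : ℚ) • (a^11*c^10) + (32898684276 : ℚ) • (a^13*c^9) + (212356969056 : ℚ) • (a^15*c^8) + (5430036927411 : ℚ) • (a^17*c^7) := by
  rw [show monoN 16 = a^1*c^7 from rfl]
  simp only [smul_eq_C_mul, map_ofNat]; unfold Rsoc; ring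

lemma monoR17 : monoN 17 * Rsoc = (438555419396 : ℚ) • (a^2*c^8) + (58754649276 : ℚ) • (a^4*c^7) + (16401517956 : ℚ) • (a^6*c^6) + (8290200636 : ℚ) • (a^8*c^5) + (7289030916 : ℚ) • (a^10*c^4) + (11291814396 : ℚ) • (a^12*c^3) + (32898684276 : ℚ) • (a^14*c^2) + (212356969056 : ℚ) • (a^16*c^1) + (5430036927411 : ℚ) • (a^18*c^0) := by
  rw [show monoN 17 = a^2*c^0 from rfl]
  simp only [smul_eq_C_mul, map_ofNat]; unfold Rsoc; ring

lemma monoR18 : monoN 18 * Rsoc = (438555419396 : ℚ) • (a^2*c^9) + (58754649276 : ℚ) • (a^4*c^8) + (16401517956 : ℚ) • (a^6*c^7) + (8290200636 : ℚ) • (a^8*c^6) + (7289030916 : ℚ) • (a^10*c^5) + (11291814396 : ℚ) • (a^12*c^4) + (32898684276 : ℚ) • (a^14*c^3) + (212356969056 : ℚ) • (a^16*c^2) + (5430036927411 : ℚ) • (a^18*c^1) := by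
  rw [show monoN 18 = a^2*c^1 from rfl]
  simp only [smul_eq_C_mul, map_ofNat]; unfold Rsoc; ring

lemma monoR19 : monoN 19 * Rsoc = (438555419396 : ℚ) • (a^2*c^10) + (58754649276 : ℚ) • (a^4*c^9) + (16401517956 : ℚ) • (a^6*c^8) + (8290200636 : ℚ) • (a^8*c^7) + (7289030916 : ℚ) • (a^10*c^6) + (11291814396 : ℚ) • (a^12*c^5) + (32898684276 : ℚ) • (a^14*c^4) + (212356969056 : ℚ) • (a^16*c^3) + (5430036927411 : ℚ) • (a^18*c^2) := by
  rw [show monoN 19 = a^2*c^2 from rfl]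
  simp only [smul_eq_C_mul, map_ofNat]; unfold Rsoc; ring

lemma monoR20 : monoN 20 * Rsoc = (438555419396 : ℚ) • (a^2*c^11) + (58754649276 : ℚ) • (a^4*c^10) + (16401517956 : ℚ) • (a^6*c^9) + (8290200636 : ℚ) • (a^8*c^8) + (7289030916 : ℚ) • (a^10*c^7) + (11291814396 : ℚ) • (a^12*c^6) + (32898684276 : ℚ) • (a^14*c^5) + (212356969056 : ℚ) • (a^16*c^4) + (5430036927411 : ℚ) • (a^18*c^3) := by
  rw [show monoN 20 = a^2*c^3 from rfl]
  simp only [smul_eq_C_mul, map_ofNat]; unfold Rsoc; ring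

lemma monoR21 : monoN 21 * Rsoc = (438555419396 : ℚ) • (a^2*c^12) + (58754649276 : ℚ) • (a^4*c^11) + (16401517956 : ℚ) • (a^6*c^10) + (8290200636 : ℚ) • (a^8*c^9) + (7289030916 : ℚ) • (a^10*c^8) + (11291814396 : ℚ) • (a^12*c^7) + (32898684276 : ℚ) • (a^14*c^6) + (212356969056 : ℚ) • (a^16*c^5) + (5430036927411 : ℚ) • (a^18*c^4) := by
  rw [show monoN 21 = a^2*c^4 from rfl]
  simp only [smul_eq_C_mul, map_ofNat]; unfold Rsoc; ring

lemma monoR22 : monoN 22 * Rsoc = (438555419396 : ℚ) • (a^2*c^13) + (58754649276 : ℚ) • (a^4*c^12) + (16401517956 : ℚ) • (a^6*c^11) + (8290200636 : ℚ) • (a^8*c^10) + (7289030916 : ℚ) • (a^10*c^9) + (11291814396 : ℚ) • (a^12*c^8) + (32898684276 : ℚ) • (a^14*c^7) + (212356969056 : ℚ) • (a^16*c^6) + (5430036927411 : ℚ) • (a^18*c^5) := by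
  rw [show monoN 22 = a^2*c^5 from rfl]
  simp only [smul_eq_C_mul, map_ofNat]; unfold Rsoc; ring

lemma monoR23 : monoN 23 * Rsoc = (438555419396 : ℚ) • (a^2*c^14) + (58754649276 : ℚ) • (a^4*c^13) + (16401517956 : ℚ) • (a^6*c^12) + (8290200636 : ℚ) • (a^8*c^11) + (7289030916 : ℚ) • (a^10*c^10) + (11291814396 : ℚ) • (a^12*c^9) + (32898684276 : ℚ) • (a^14*c^8) + (212356969056 : ℚ) • (a^16*c^7) + (5430036927411 : ℚ) • (a^18*c^6) := by
  rw [show monoN 23 = a^2*c^6 from rfl]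
  simp only [smul_eq_C_mul, map_ofNat]; unfold Rsoc; ring

lemma monoR24 : monoN 24 * Rsoc = (438555419396 : ℚ) • (a^3*c^8) + (58754649276 : ℚ) • (a^5*c^7) + (16401517956 : ℚ) • (a^7*c^6) + (8290200636 : ℚ) • (a^9*c^5) + (7289030916 : ℚ) • (a^11*c^4) + (11291814396 : ℚ) • (a^13*c^3) + (32898684276 : ℚ) • (a^15*c^2) + (212356969056 : ℚ) • (a^17*c^1) + (5430036927411 : ℚ) • (a^19*c^0) := by
  rw [show monoN 24 = a^3*c^0 from rfl]
  simp only [smul_eq_C_mul, map_ofNat]; unfold Rsoc; ring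

lemma monoR25 : monoN 25 * Rsoc = (438555419396 : ℚ) • (a^3*c^9) + (58754649276 : ℚ) • (a^5*c^8) + (16401517956 : ℚ) • (a^7*c^7) + (8290200636 : ℚ) • (a^9*c^6) + (7289030916 : ℚ) • (a^11*c^5) + (11291814396 : ℚ) • (a^13*c^4) + (32898684276 : ℚ) • (a^15*c^3) + (212356969056 : ℚ) • (a^17*c^2) + (5430036927411 : ℚ) • (a^19*c^1) := by
  rw [show monoN 25 = a^3*c^1 from rfl]
  simp only [smul_eq_C_mul, map_ofNat]; unfold Rsoc; ring

lemma monoR26 : monoN 26 * Rsoc = (438555419396 : ℚ) • (a^3*c^10) + (58754649276 : ℚ) • (a^5*c^9) + (16401517956 : ℚ) • (a^7*c^8) + (8290200636 : ℚ) • (a^9*c^7) + (7289030916 : ℚ) • (a^11*c^6) + (11291814396 : ℚ) • (a^13*c^5) + (32898684276 : ℚ) • (a^15*c^4) + (212356969056 : ℚ) • (a^17*c^3) + (5430036927411 : ℚ) • (a^19*c^2) := by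
  rw [show monoN 26 = a^3*c^2 from rfl]
  simp only [smul_eq_C_mul, map_ofNat]; unfold Rsoc; ring

lemma monoR27 : monoN 27 * Rsoc = (438555419396 : ℚ) • (a^3*c^11) + (58754649276 : ℚ) • (a^5*c^10) + (16401517956 : ℚ) • (a^7*c^9) + (8290200636 : ℚ) • (a^9*c^8) + (7289030916 : ℚ) • (a^11*c^7) + (11291814396 : ℚ) • (a^13*c^6) + (32898684276 : ℚ) • (a^15*c^5) + (212356969056 : ℚ) • (a^17*c^4) + (5430036927411 : ℚ) • (a^19*c^3) := by
  rw [show monoN 27 = a^3*c^3 from rfl]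
  simp only [smul_eq_C_mul, map_ofNat]; unfold Rsoc; ring

lemma monoR28 : monoN 28 * Rsoc = (438555419396 : ℚ) • (a^3*c^12) + (58754649276 : ℚ) • (a^5*c^11) + (16401517956 : ℚ) • (a^7*c^10) + (8290200636 : ℚ) • (a^9*c^9) + (7289030916 : ℚ) • (a^11*c^8) + (11291814396 : ℚ) • (a^13*c^7) + (32898684276 : ℚ) • (a^15*c^6) + (212356969056 : ℚ) • (a^17*c^5) + (5430036927411 : ℚ) • (a^19*c^4) := by
  rw [show monoN 28 = a^3*c^4 from rfl]
  simp only [smul_eq_C_mul, map_ofNat]; unfold Rsoc; ring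

lemma monoR29 : monoN 29 * Rsoc = (438555419396 : ℚ) • (a^3*c^13) + (58754649276 : ℚ) • (a^5*c^12) + (16401517956 : ℚ) • (a^7*c^11) + (8290200636 : ℚ) • (a^9*c^10) + (7289030916 : ℚ) • (a^11*c^9) + (11291814396 : ℚ) • (a^13*c^8) + (32898684276 : ℚ) • (a^15*c^7) + (212356969056 : ℚ) • (a^17*c^6) + (5430036927411 : ℚ) • (a^19*c^5) := by
  rw [show monoN 29 = a^3*c^5 from rfl]
  simp only [smul_eq_C_mul, map_ofNat]; unfold Rsoc; ring

lemma monoR30 : monoN 30 * Rsoc = (438555419396 : ℚ) • (a^4*c^8) + (58754649276 : ℚ) • (a^6*c^7) + (16401517956 : ℚ) • (a^8*c^6) + (8290200636 : ℚ) • (a^10*c^5) + (7289030916 : ℚ) • (a^12*c^4) + (11291814396 : ℚ) • (a^14*c^3) + (32898684276 : ℚ) • (a^16*c^2) + (212356969056 : ℚ) • (a^18*c^1) + (5430036927411 : ℚ) • (a^20*c^0) := by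
  rw [show monoN 30 = a^4*c^0 from rfl]
  simp only [smul_eq_C_mul, map_ofNat]; unfold Rsoc; ring

lemma monoR31 : monoN 31 * Rsoc = (438555419396 : ℚ) • (a^4*c^9) + (58754649276 : ℚ) • (a^6*c^8) + (16401517956 : ℚ) • (a^8*c^7) + (8290200636 : ℚ) • (a^10*c^6) + (7289030916 : ℚ) • (a^12*c^5) + (11291814396 : ℚ) • (a^14*c^4) + (32898684276 : ℚ) • (a^16*c^3) + (212356969056 : ℚ) • (a^18*c^2) + (5430036927411 : ℚ) • (a^20*c^1) := by
  rw [show monoN 31 = a^4*c^1 from rfl]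
  simp only [smul_eq_C_mul, map_ofNat]; unfold Rsoc; ring

lemma monoR32 : monoN 32 * Rsoc = (438555419396 : ℚ) • (a^4*c^10) + (58754649276 : ℚ) • (a^6*c^9) + (16401517956 : ℚ) • (a^8*c^8) + (8290200636 : ℚ) • (a^10*c^7) + (7289030916 : ℚ) • (a^12*c^6) + (11291814396 : ℚ) • (a^14*c^5) + (32898684276 : ℚ) • (a^16*c^4) + (212356969056 : ℚ) • (a^18*c^3) + (5430036927411 : ℚ) • (a^20*c^2) := by
  rw [show monoN 32 = a^4*c^2 from rfl]
  simp only [smul_eq_C_mul, map_ofNat]; unfold Rsoc; ring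

lemma monoR33 : monoN 33 * Rsoc = (438555419396 : ℚ) • (a^4*c^11) + (58754649276 : ℚ) • (a^6*c^10) + (16401517956 : ℚ) • (a^8*c^9) + (8290200636 : ℚ) • (a^10*c^8) + (7289030916 : ℚ) • (a^12*c^7) + (11291814396 : ℚ) • (a^14*c^6) + (32898684276 : ℚ) • (a^16*c^5) + (212356969056 : ℚ) • (a^18*c^4) + (5430036927411 : ℚ) • (a^20*c^3) := by
  rw [show monoN 33 = a^4*c^3 from rfl]
  simp only [smul_eq_C_mul, map_ofNat]; unfold Rsoc; ring

lemma monoR34 : monoN 34 * Rsoc = (438555419396 : ℚ) • (a^4*c^12) + (58754649276 : ℚ) • (a^6*c^11) + (16401517956 : ℚ) • (a^8*c^10) + (8290200636 : ℚ) • (a^10*c^9) + (7289030916 : ℚ) • (a^12*c^8) + (11291814396 : ℚ) • (a^14*c^7) + (32898684276 : ℚ) • (a^16*c^6) + (212356969056 : ℚ) • (a^18*c^5) + (5430036927411 : ℚ) • (a^20*c^4) := by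
  rw [show monoN 34 = a^4*c^4 from rfl]
  simp only [smul_eq_C_mul, map_ofNat]; unfold Rsoc; ring

lemma monoR35 : monoN 35 * Rsoc = (438555419396 : ℚ) • (a^5*c^8) + (58754649276 : ℚ) • (a^7*c^7) + (16401517956 : ℚ) • (a^9*c^6) + (8290200636 : ℚ) • (a^11*c^5) + (7289030916 : ℚ) • (a^13*c^4) + (11291814396 : ℚ) • (a^15*c^3) + (32898684276 : ℚ) • (a^17*c^2) + (212356969056 : ℚ) • (a^19*c^1) + (5430036927411 : ℚ) • (a^21*c^0) := by
  rw [show monoN 35 = a^5*c^0 from rfl]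
  simp only [smul_eq_C_mul, map_ofNat]; unfold Rsoc; ring

lemma monoR36 : monoN 36 * Rsoc = (438555419396 : ℚ) • (a^5*c^9) + (58754649276 : ℚ) • (a^7*c^8) + (16401517956 : ℚ) • (a^9*c^7) + (8290200636 : ℚ) • (a^11*c^6) + (7289030916 : ℚ) • (a^13*c^5) + (11291814396 : ℚ) • (a^15*c^4) + (32898684276 : ℚ) • (a^17*c^3) + (212356969056 : ℚ) • (a^19*c^2) + (5430036927411 : ℚ) • (a^21*c^1) := by
  rw [show monoN 36 = a^5*c^1 from rfl]
  simp only [smul_eq_C_mul, map_ofNat]; unfold Rsoc; ring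

lemma monoR37 : monoN 37 * Rsoc = (438555419396 : ℚ) • (a^5*c^10) + (58754649276 : ℚ) • (a^7*c^9) + (16401517956 : ℚ) • (a^9*c^8) + (8290200636 : ℚ) • (a^11*c^7) + (7289030916 : ℚ) • (a^13*c^6) + (11291814396 : ℚ) • (a^15*c^5) + (32898684276 : ℚ) • (a^17*c^4) + (212356969056 : ℚ) • (a^19*c^3) + (5430036927411 : ℚ) • (a^21*c^2) := by
  rw [show monoN 37 = a^5*c^2 from rfl]
  simp only [smul_eq_C_mul, map_ofNat]; unfold Rsoc; ring

lemma monoR38 : monoN 38 * Rsoc = (438555419396 : ℚ) • (a^5*c^11) + (58754649276 : ℚ) • (a^7*c^10) + (16401517956 : ℚ) • (a^9*c^9) + (8290200636 : ℚ) • (a^11*c^8) + (7289030916 : ℚ) • (a^13*c^7) + (11291814396 : ℚ) • (a^15*c^6) + (32898684276 : ℚ) • (a^17*c^5) + (212356969056 : ℚ) • (a^19*c^4) + (5430036927411 : ℚ) • (a^21*c^3) := by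
  rw [show monoN 38 = a^5*c^3 from rfl]
  simp only [smul_eq_C_mul, map_ofNat]; unfold Rsoc; ring

lemma monoR39 : monoN 39 * Rsoc = (438555419396 : ℚ) • (a^6*c^8) + (58754649276 : ℚ) • (a^8*c^7) + (16401517956 : ℚ) • (a^10*c^6) + (8290200636 : ℚ) • (a^12*c^5) + (7289030916 : ℚ) • (a^14*c^4) + (11291814396 : ℚ) • (a^16*c^3) + (32898684276 : ℚ) • (a^18*c^2) + (212356969056 : ℚ) • (a^20*c^1) + (5430036927411 : ℚ) • (a^22*c^0) := by
  rw [show monoN 39 = a^6*c^0 from rfl]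
  simp only [smul_eq_C_mul, map_ofNat]; unfold Rsoc; ring

lemma monoR40 : monoN 40 * Rsoc = (438555419396 : ℚ) • (a^6*c^9) + (58754649276 : ℚ) • (a^8*c^8) + (16401517956 : ℚ) • (a^10*c^7) + (8290200636 : ℚ) • (a^12*c^6) + (7289030916 : ℚ) • (a^14*c^5) + (11291814396 : ℚ) • (a^16*c^4) + (32898684276 : ℚ) • (a^18*c^3) + (212356969056 : ℚ) • (a^20*c^2) + (5430036927411 : ℚ) • (a^22*c^1) := by
  rw [show monoN 40 = a^6*c^1 from rfl]
  simp only [smul_eq_C_mul, map_ofNat]; unfold Rsoc; ring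

lemma monoR41 : monoN 41 * Rsoc = (438555419396 : ℚ) • (a^6*c^10) + (58754649276 : ℚ) • (a^8*c^9) + (16401517956 : ℚ) • (a^10*c^8) + (8290200636 : ℚ) • (a^12*c^7) + (7289030916 : ℚ) • (a^14*c^6) + (11291814396 : ℚ) • (a^16*c^5) + (32898684276 : ℚ) • (a^18*c^4) + (212356969056 : ℚ) • (a^20*c^3) + (5430036927411 : ℚ) • (a^22*c^2) := by
  rw [show monoN 41 = a^6*c^2 from rfl]
  simp only [smul_eq_C_mul, map_ofNat]; unfold Rsoc; ring

lemma monoR42 : monoN 42 * Rsoc = (438555419396 : ℚ) • (a^7*c^8) + (58754649276 : ℚ) • (a^9*c^7) + (16401517956 : ℚ) • (a^11*c^6) + (8290200636 : ℚ) • (a^13*c^5) + (7289030916 : ℚ) • (a^15*c^4) + (11291814396 : ℚ) • (a^17*c^3) + (32898684276 : ℚ) • (a^19*c^2) + (212356969056 : ℚ) • (a^21*c^1) + (5430036927411 : ℚ) • (a^23*c^0) := by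
  rw [show monoN 42 = a^7*c^0 from rfl]
  simp only [smul_eq_C_mul, map_ofNat]; unfold Rsoc; ring

lemma monoR43 : monoN 43 * Rsoc = (438555419396 : ℚ) • (a^7*c^9) + (58754649276 : ℚ) • (a^9*c^8) + (16401517956 : ℚ) • (a^11*c^7) + (8290200636 : ℚ) • (a^13*c^6) + (7289030916 : ℚ) • (a^15*c^5) + (11291814396 : ℚ) • (a^17*c^4) + (32898684276 : ℚ) • (a^19*c^3) + (212356969056 : ℚ) • (a^21*c^2) + (5430036927411 : ℚ) • (a^23*c^1) := by
  rw [show monoN 43 = a^7*c^1 from rfl]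
  simp only [smul_eq_C_mul, map_ofNat]; unfold Rsoc; ring

lemma monoR44 : monoN 44 * Rsoc = (438555419396 : ℚ) • (a^8*c^8) + (58754649276 : ℚ) • (a^10*c^7) + (16401517956 : ℚ) • (a^12*c^6) + (8290200636 : ℚ) • (a^14*c^5) + (7289030916 : ℚ) • (a^16*c^4) + (11291814396 : ℚ) • (a^18*c^3) + (32898684276 : ℚ) • (a^20*c^2) + (212356969056 : ℚ) • (a^22*c^1) + (5430036927411 : ℚ) • (a^24*c^0) := by
  rw [show monoN 44 = a^8*c^0 from rfl]
  simp only [smul_eq_C_mul, map_ofNat]; unfold Rsoc; ring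

set_option maxHeartbeats 0 in
lemma indep : LinearIndependent ℚ stdV := by
  rw [Fintype.linearIndependent_iff]
  intro g hg
  set G : ℕ → ℚ := fun n => if h : n < 45 then g ⟨n, h⟩ else 0 with hG
  have hsum : ∑ n ∈ Finset.range 45, G n • Ideal.Quotient.mk Isp (monoN n) = 0 := by
    rw [← Fin.sum_univ_eq_sum_range (fun n => G n • Ideal.Quotient.mk Isp (monoN n)) 45, ← hg]
    refine Finset.sum_congr rfl fun i _ => ?_
    have hGi : G i.val = g i := by simp [hG]
    rw [hGi]; rfl
  have hp : (∑ n ∈ Finset.range 45, G n • monoN n) ∈ Isp := by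
    rw [← Ideal.Quotient.eq_zero_iff_mem,
        show Ideal.Quotient.mk Isp = ⇑(Ideal.Quotient.mkₐ ℚ Isp) from
          (Ideal.Quotient.mkₐ_eq_mk ℚ Isp).symm, map_sum]
    simp only [map_smul]
    rw [show ⇑(Ideal.Quotient.mkₐ ℚ Isp) = Ideal.Quotient.mk Isp from Ideal.Quotient.mkₐ_eq_mk ℚ Isp]
    exact hsum
  have E0 : coeff (tgt 16 8) ((∑ n ∈ Finset.range 45, G n • monoN n) * Rsoc) = 0 :=
    psi_zero 16 8 (by norm_num) (by norm_num) _ hp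
  simp only [Finset.sum_range_succ, Finset.sum_range_zero, zero_add, add_mul,
    smul_mul_assoc, monoR0, monoR1, monoR2, monoR3, monoR4, monoR5, monoR6, monoR7, monoR8, monoR9, monoR10, monoR11, monoR12, monoR13, monoR14, monoR15, monoR16, monoR17, monoR18, monoR19, monoR20, monoR21, monoR22, monoR23, monoR24, monoR25, monoR26, monoR27, monoR28, monoR29, monoR30, monoR31, monoR32, monoR33, monoR34, monoR35, monoR36, monoR37, monoR38, monoR39, monoR40, monoR41, monoR42, monoR43, monoR44,
    smul_add, coeff_add, coeff_smul, smul_eq_mul, coeff_tgt] at E0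
  norm_num at E0
  have E1 : coeff (tgt 16 7) ((∑ n ∈ Finset.range 45, G n • monoN n) * Rsoc) = 0 :=
    psi_zero 16 7 (by norm_num) (by norm_num) _ hp
  simp only [Finset.sum_range_succ, Finset.sum_range_zero, zero_add, add_mul,
    smul_mul_assoc, monoR0, monoR1, monoR2, monoR3, monoR4, monoR5, monoR6, monoR7, monoR8, monoR9, monoR10, monoR11, monoR12, monoR13, monoR14, monoR15, monoR16, monoR17, monoR18, monoR19, monoR20, monoR21, monoR22, monoR23, monoR24, monoR25, monoR26, monoR27, monoR28, monoR29, monoR30, monoR31, monoR32, monoR33, monoR34, monoR35, monoR36, monoR37, monoR38, monoR39, monoR40, monoR41, monoR42, monoR43, monoR44,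
    smul_add, coeff_add, coeff_smul, smul_eq_mul, coeff_tgt] at E1
  norm_num at E1
  have E2 : coeff (tgt 16 6) ((∑ n ∈ Finset.range 45, G n • monoN n) * Rsoc) = 0 :=
    psi_zero 16 6 (by norm_num) (by norm_num) _ hp
  simp only [Finset.sum_range_succ, Finset.sum_range_zero, zero_add, add_mul,
    smul_mul_assoc, monoR0, monoR1, monoR2, monoR3, monoR4, monoR5, monoR6, monoR7, monoR8, monoR9, monoR10, monoR11, monoR12, monoR13, monoR14, monoR15, monoR16, monoR17, monoR18, monoR19, monoR20, monoR21, monoR22, monoR23, monoR24, monoR25, monoR26, monoR27, monoR28, monoR29, monoR30, monoR31, monoR32, monoR33, monoR34, monoR35, monoR36, monoR37, monoR38, monoR39, monoR40, monoR41, monoR42, monoR43, monoR44,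
    smul_add, coeff_add, coeff_smul, smul_eq_mul, coeff_tgt] at E2
  norm_num at E2
  have E3 : coeff (tgt 16 5) ((∑ n ∈ Finset.range 45, G n • monoN n) * Rsoc) = 0 :=
    psi_zero 16 5 (by norm_num) (by norm_num) _ hp
  simp only [Finset.sum_range_succ, Finset.sum_range_zero, zero_add, add_mul,
    smul_mul_assoc, monoR0, monoR1, monoR2, monoR3, monoR4, monoR5, monoR6, monoR7, monoR8, monoR9, monoR10, monoR11, monoR12, monoR13, monoR14, monoR15, monoR16, monoR17, monoR18, monoR19, monoR20, monoR21, monoR22, monoR23, monoR24, monoR25, monoR26, monoR27, monoR28, monoR29, monoR30, monoR31, monoR32, monoR33, monoR34, monoR35, monoR36, monoR37, monoR38, monoR39, monoR40, monoR41, monoR42, monoR43, monoR44,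
    smul_add, coeff_add, coeff_smul, smul_eq_mul, coeff_tgt] at E3
  norm_num at E3
  have E4 : coeff (tgt 16 4) ((∑ n ∈ Finset.range 45, G n • monoN n) * Rsoc) = 0 :=
    psi_zero 16 4 (by norm_num) (by norm_num) _ hp
  simp only [Finset.sum_range_succ, Finset.sum_range_zero, zero_add, add_mul,
    smul_mul_assoc, monoR0, monoR1, monoR2, monoR3, monoR4, monoR5, monoR6, monoR7, monoR8, monoR9, monoR10, monoR11, monoR12, monoR13, monoR14, monoR15, monoR16, monoR17, monoR18, monoR19, monoR20, monoR21, monoR22, monoR23, monoR24, monoR25, monoR26, monoR27, monoR28, monoR29, monoR30, monoR31, monoR32, monoR33, monoR34, monoR35, monoR36, monoR37, monoR38, monoR39, monoR40, monoR41, monoR42, monoR43, monoR44,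
    smul_add, coeff_add, coeff_smul, smul_eq_mul, coeff_tgt] at E4
  norm_num at E4
  have E5 : coeff (tgt 16 3) ((∑ n ∈ Finset.range 45, G n • monoN n) * Rsoc) = 0 :=
    psi_zero 16 3 (by norm_num) (by norm_num) _ hp
  simp only [Finset.sum_range_succ, Finset.sum_range_zero, zero_add, add_mul,
    smul_mul_assoc, monoR0, monoR1, monoR2, monoR3, monoR4, monoR5, monoR6, monoR7, monoR8, monoR9, monoR10, monoR11, monoR12, monoR13, monoR14, monoR15, monoR16, monoR17, monoR18, monoR19, monoR20, monoR21, monoR22, monoR23, monoR24, monoR25, monoR26, monoR27, monoR28, monoR29, monoR30, monoR31, monoR32, monoR33, monoR34, monoR35, monoR36, monoR37, monoR38, monoR39, monoR40, monoR41, monoR42, monoR43, monoR44,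
    smul_add, coeff_add, coeff_smul, smul_eq_mul, coeff_tgt] at E5
  norm_num at E5
  have E6 : coeff (tgt 16 2) ((∑ n ∈ Finset.range 45, G n • monoN n) * Rsoc) = 0 :=
    psi_zero 16 2 (by norm_num) (by norm_num) _ hp
  simp only [Finset.sum_range_succ, Finset.sum_range_zero, zero_add, add_mul,
    smul_mul_assoc, monoR0, monoR1, monoR2, monoR3, monoR4, monoR5, monoR6, monoR7, monoR8, monoR9, monoR10, monoR11, monoR12, monoR13, monoR14, monoR15, monoR16, monoR17, monoR18, monoR19, monoR20, monoR21, monoR22, monoR23, monoR24, monoR25, monoR26, monoR27, monoR28, monoR29, monoR30, monoR31, monoR32, monoR33, monoR34, monoR35, monoR36, monoR37, monoR38, monoR39, monoR40, monoR41, monoR42, monoR43, monoR44,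
    smul_add, coeff_add, coeff_smul, smul_eq_mul, coeff_tgt] at E6
  norm_num at E6
  have E7 : coeff (tgt 16 1) ((∑ n ∈ Finset.range 45, G n • monoN n) * Rsoc) = 0 :=
    psi_zero 16 1 (by norm_num) (by norm_num) _ hp
  simp only [Finset.sum_range_succ, Finset.sum_range_zero, zero_add, add_mul,
    smul_mul_assoc, monoR0, monoR1, monoR2, monoR3, monoR4, monoR5, monoR6, monoR7, monoR8, monoR9, monoR10, monoR11, monoR12, monoR13, monoR14, monoR15, monoR16, monoR17, monoR18, monoR19, monoR20, monoR21, monoR22, monoR23, monoR24, monoR25, monoR26, monoR27, monoR28, monoR29, monoR30, monoR31, monoR32, monoR33, monoR34, monoR35, monoR36, monoR37, monoR38, monoR39, monoR40, monoR41, monoR42, monoR43, monoR44,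
    smul_add, coeff_add, coeff_smul, smul_eq_mul, coeff_tgt] at E7
  norm_num at E7
  have E8 : coeff (tgt 16 0) ((∑ n ∈ Finset.range 45, G n • monoN n) * Rsoc) = 0 :=
    psi_zero 16 0 (by norm_num) (by norm_num) _ hp
  simp only [Finset.sum_range_succ, Finset.sum_range_zero, zero_add, add_mul,
    smul_mul_assoc, monoR0, monoR1, monoR2, monoR3, monoR4, monoR5, monoR6, monoR7, monoR8, monoR9, monoR10, monoR11, monoR12, monoR13, monoR14, monoR15, monoR16, monoR17, monoR18, monoR19, monoR20, monoR21, monoR22, monoR23, monoR24, monoR25, monoR26, monoR27, monoR28, monoR29, monoR30, monoR31, monoR32, monoR33, monoR34, monoR35, monoR36, monoR37, monoR38, monoR39, monoR40, monoR41, monoR42, monoR43, monoR44,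
    smul_add, coeff_add, coeff_smul, smul_eq_mul, coeff_tgt] at E8
  norm_num at E8
  have E9 : coeff (tgt 15 8) ((∑ n ∈ Finset.range 45, G n • monoN n) * Rsoc) = 0 :=
    psi_zero 15 8 (by norm_num) (by norm_num) _ hp
  simp only [Finset.sum_range_succ, Finset.sum_range_zero, zero_add, add_mul,
    smul_mul_assoc, monoR0, monoR1, monoR2, monoR3, monoR4, monoR5, monoR6, monoR7, monoR8, monoR9, monoR10, monoR11, monoR12, monoR13, monoR14, monoR15, monoR16, monoR17, monoR18, monoR19, monoR20, monoR21, monoR22, monoR23, monoR24, monoR25, monoR26, monoR27, monoR28, monoR29, monoR30, monoR31, monoR32, monoR33, monoR34, monoR35, monoR36, monoR37, monoR38, monoR39, monoR40, monoR41, monoR42, monoR43, monoR44,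
    smul_add, coeff_add, coeff_smul, smul_eq_mul, coeff_tgt] at E9
  norm_num at E9
  have E10 : coeff (tgt 15 7) ((∑ n ∈ Finset.range 45, G n • monoN n) * Rsoc) = 0 :=
    psi_zero 15 7 (by norm_num) (by norm_num) _ hp
  simp only [Finset.sum_range_succ, Finset.sum_range_zero, zero_add, add_mul,
    smul_mul_assoc, monoR0, monoR1, monoR2, monoR3, monoR4, monoR5, monoR6, monoR7, monoR8, monoR9, monoR10, monoR11, monoR12, monoR13, monoR14, monoR15, monoR16, monoR17, monoR18, monoR19, monoR20, monoR21, monoR22, monoR23, monoR24, monoR25, monoR26, monoR27, monoR28, monoR29, monoR30, monoR31, monoR32, monoR33, monoR34, monoR35, monoR36, monoR37, monoR38, monoR39, monoR40, monoR41, monoR42, monoR43, monoR44,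
    smul_add, coeff_add, coeff_smul, smul_eq_mul, coeff_tgt] at E10
  norm_num at E10
  have E11 : coeff (tgt 15 6) ((∑ n ∈ Finset.range 45, G n • monoN n) * Rsoc) = 0 :=
    psi_zero 15 6 (by norm_num) (by norm_num) _ hp
  simp only [Finset.sum_range_succ, Finset.sum_range_zero, zero_add, add_mul,
    smul_mul_assoc, monoR0, monoR1, monoR2, monoR3, monoR4, monoR5, monoR6, monoR7, monoR8, monoR9, monoR10, monoR11, monoR12, monoR13, monoR14, monoR15, monoR16, monoR17, monoR18, monoR19, monoR20, monoR21, monoR22, monoR23, monoR24, monoR25, monoR26, monoR27, monoR28, monoR29, monoR30, monoR31, monoR32, monoR33, monoR34, monoR35, monoR36, monoR37, monoR38, monoR39, monoR40, monoR41, monoR42, monoR43, monoR44,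
    smul_add, coeff_add, coeff_smul, smul_eq_mul, coeff_tgt] at E11
  norm_num at E11
  have E12 : coeff (tgt 15 5) ((∑ n ∈ Finset.range 45, G n • monoN n) * Rsoc) = 0 :=
    psi_zero 15 5 (by norm_num) (by norm_num) _ hp
  simp only [Finset.sum_range_succ, Finset.sum_range_zero, zero_add, add_mul,
    smul_mul_assoc, monoR0, monoR1, monoR2, monoR3, monoR4, monoR5, monoR6, monoR7, monoR8, monoR9, monoR10, monoR11, monoR12, monoR13, monoR14, monoR15, monoR16, monoR17, monoR18, monoR19, monoR20, monoR21, monoR22, monoR23, monoR24, monoR25, monoR26, monoR27, monoR28, monoR29, monoR30, monoR31, monoR32, monoR33, monoR34, monoR35, monoR36, monoR37, monoR38, monoR39, monoR40, monoR41, monoR42, monoR43, monoR44,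
    smul_add, coeff_add, coeff_smul, smul_eq_mul, coeff_tgt] at E12
  norm_num at E12
  have E13 : coeff (tgt 15 4) ((∑ n ∈ Finset.range 45, G n • monoN n) * Rsoc) = 0 :=
    psi_zero 15 4 (by norm_num) (by norm_num) _ hp
  simp only [Finset.sum_range_succ, Finset.sum_range_zero, zero_add, add_mul,
    smul_mul_assoc, monoR0, monoR1, monoR2, monoR3, monoR4, monoR5, monoR6, monoR7, monoR8, monoR9, monoR10, monoR11, monoR12, monoR13, monoR14, monoR15, monoR16, monoR17, monoR18, monoR19, monoR20, monoR21, monoR22, monoR23, monoR24, monoR25, monoR26, monoR27, monoR28, monoR29, monoR30, monoR31, monoR32, monoR33, monoR34, monoR35, monoR36, monoR37, monoR38, monoR39, monoR40, monoR41, monoR42, monoR43, monoR44,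
    smul_add, coeff_add, coeff_smul, smul_eq_mul, coeff_tgt] at E13
  norm_num at E13
  have E14 : coeff (tgt 15 3) ((∑ n ∈ Finset.range 45, G n • monoN n) * Rsoc) = 0 :=
    psi_zero 15 3 (by norm_num) (by norm_num) _ hp
  simp only [Finset.sum_range_succ, Finset.sum_range_zero, zero_add, add_mul,
    smul_mul_assoc, monoR0, monoR1, monoR2, monoR3, monoR4, monoR5, monoR6, monoR7, monoR8, monoR9, monoR10, monoR11, monoR12, monoR13, monoR14, monoR15, monoR16, monoR17, monoR18, monoR19, monoR20, monoR21, monoR22, monoR23, monoR24, monoR25, monoR26, monoR27, monoR28, monoR29, monoR30, monoR31, monoR32, monoR33, monoR34, monoR35, monoR36, monoR37, monoR38, monoR39, monoR40, monoR41, monoR42, monoR43, monoR44,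
    smul_add, coeff_add, coeff_smul, smul_eq_mul, coeff_tgt] at E14
  norm_num at E14
  have E15 : coeff (tgt 15 2) ((∑ n ∈ Finset.range 45, G n • monoN n) * Rsoc) = 0 :=
    psi_zero 15 2 (by norm_num) (by norm_num) _ hp
  simp only [Finset.sum_range_succ, Finset.sum_range_zero, zero_add, add_mul,
    smul_mul_assoc, monoR0, monoR1, monoR2, monoR3, monoR4, monoR5, monoR6, monoR7, monoR8, monoR9, monoR10, monoR11, monoR12, monoR13, monoR14, monoR15, monoR16, monoR17, monoR18, monoR19, monoR20, monoR21, monoR22, monoR23, monoR24, monoR25, monoR26, monoR27, monoR28, monoR29, monoR30, monoR31, monoR32, monoR33, monoR34, monoR35, monoR36, monoR37, monoR38, monoR39, monoR40, monoR41, monoR42, monoR43, monoR44,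
    smul_add, coeff_add, coeff_smul, smul_eq_mul, coeff_tgt] at E15
  norm_num at E15
  have E16 : coeff (tgt 15 1) ((∑ n ∈ Finset.range 45, G n • monoN n) * Rsoc) = 0 :=
    psi_zero 15 1 (by norm_num) (by norm_num) _ hp
  simp only [Finset.sum_range_succ, Finset.sum_range_zero, zero_add, add_mul,
    smul_mul_assoc, monoR0, monoR1, monoR2, monoR3, monoR4, monoR5, monoR6, monoR7, monoR8, monoR9, monoR10, monoR11, monoR12, monoR13, monoR14, monoR15, monoR16, monoR17, monoR18, monoR19, monoR20, monoR21, monoR22, monoR23, monoR24, monoR25, monoR26, monoR27, monoR28, monoR29, monoR30, monoR31, monoR32, monoR33, monoR34, monoR35, monoR36, monoR37, monoR38, monoR39, monoR40, monoR41, monoR42, monoR43, monoR44,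
    smul_add, coeff_add, coeff_smul, smul_eq_mul, coeff_tgt] at E16
  norm_num at E16
  have E17 : coeff (tgt 14 8) ((∑ n ∈ Finset.range 45, G n • monoN n) * Rsoc) = 0 :=
    psi_zero 14 8 (by norm_num) (by norm_num) _ hp
  simp only [Finset.sum_range_succ, Finset.sum_range_zero, zero_add, add_mul,
    smul_mul_assoc, monoR0, monoR1, monoR2, monoR3, monoR4, monoR5, monoR6, monoR7, monoR8, monoR9, monoR10, monoR11, monoR12, monoR13, monoR14, monoR15, monoR16, monoR17, monoR18, monoR19, monoR20, monoR21, monoR22, monoR23, monoR24, monoR25, monoR26, monoR27, monoR28, monoR29, monoR30, monoR31, monoR32, monoR33, monoR34, monoR35, monoR36, monoR37, monoR38, monoR39, monoR40, monoR41, monoR42, monoR43, monoR44,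
    smul_add, coeff_add, coeff_smul, smul_eq_mul, coeff_tgt] at E17
  norm_num at E17
  have E18 : coeff (tgt 14 7) ((∑ n ∈ Finset.range 45, G n • monoN n) * Rsoc) = 0 :=
    psi_zero 14 7 (by norm_num) (by norm_num) _ hp
  simp only [Finset.sum_range_succ, Finset.sum_range_zero, zero_add, add_mul,
    smul_mul_assoc, monoR0, monoR1, monoR2, monoR3, monoR4, monoR5, monoR6, monoR7, monoR8, monoR9, monoR10, monoR11, monoR12, monoR13, monoR14, monoR15, monoR16, monoR17, monoR18, monoR19, monoR20, monoR21, monoR22, monoR23, monoR24, monoR25, monoR26, monoR27, monoR28, monoR29, monoR30, monoR31, monoR32, monoR33, monoR34, monoR35, monoR36, monoR37, monoR38, monoR39, monoR40, monoR41, monoR42, monoR43, monoR44,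
    smul_add, coeff_add, coeff_smul, smul_eq_mul, coeff_tgt] at E18
  norm_num at E18
  have E19 : coeff (tgt 14 6) ((∑ n ∈ Finset.range 45, G n • monoN n) * Rsoc) = 0 :=
    psi_zero 14 6 (by norm_num) (by norm_num) _ hp
  simp only [Finset.sum_range_succ, Finset.sum_range_zero, zero_add, add_mul,
    smul_mul_assoc, monoR0, monoR1, monoR2, monoR3, monoR4, monoR5, monoR6, monoR7, monoR8, monoR9, monoR10, monoR11, monoR12, monoR13, monoR14, monoR15, monoR16, monoR17, monoR18, monoR19, monoR20, monoR21, monoR22, monoR23, monoR24, monoR25, monoR26, monoR27, monoR28, monoR29, monoR30, monoR31, monoR32, monoR33, monoR34, monoR35, monoR36, monoR37, monoR38, monoR39, monoR40, monoR41, monoR42, monoR43, monoR44,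
    smul_add, coeff_add, coeff_smul, smul_eq_mul, coeff_tgt] at E19
  norm_num at E19
  have E20 : coeff (tgt 14 5) ((∑ n ∈ Finset.range 45, G n • monoN n) * Rsoc) = 0 :=
    psi_zero 14 5 (by norm_num) (by norm_num) _ hp
  simp only [Finset.sum_range_succ, Finset.sum_range_zero, zero_add, add_mul,
    smul_mul_assoc, monoR0, monoR1, monoR2, monoR3, monoR4, monoR5, monoR6, monoR7, monoR8, monoR9, monoR10, monoR11, monoR12, monoR13, monoR14, monoR15, monoR16, monoR17, monoR18, monoR19, monoR20, monoR21, monoR22, monoR23, monoR24, monoR25, monoR26, monoR27, monoR28, monoR29, monoR30, monoR31, monoR32, monoR33, monoR34, monoR35, monoR36, monoR37, monoR38, monoR39, monoR40, monoR41, monoR42, monoR43, monoR44,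
    smul_add, coeff_add, coeff_smul, smul_eq_mul, coeff_tgt] at E20
  norm_num at E20
  have E21 : coeff (tgt 14 4) ((∑ n ∈ Finset.range 45, G n • monoN n) * Rsoc) = 0 :=
    psi_zero 14 4 (by norm_num) (by norm_num) _ hp
  simp only [Finset.sum_range_succ, Finset.sum_range_zero, zero_add, add_mul,
    smul_mul_assoc, monoR0, monoR1, monoR2, monoR3, monoR4, monoR5, monoR6, monoR7, monoR8, monoR9, monoR10, monoR11, monoR12, monoR13, monoR14, monoR15, monoR16, monoR17, monoR18, monoR19, monoR20, monoR21, monoR22, monoR23, monoR24, monoR25, monoR26, monoR27, monoR28, monoR29, monoR30, monoR31, monoR32, monoR33, monoR34, monoR35, monoR36, monoR37, monoR38, monoR39, monoR40, monoR41, monoR42, monoR43, monoR44,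
    smul_add, coeff_add, coeff_smul, smul_eq_mul, coeff_tgt] at E21
  norm_num at E21
  have E22 : coeff (tgt 14 3) ((∑ n ∈ Finset.range 45, G n • monoN n) * Rsoc) = 0 :=
    psi_zero 14 3 (by norm_num) (by norm_num) _ hp
  simp only [Finset.sum_range_succ, Finset.sum_range_zero, zero_add, add_mul,
    smul_mul_assoc, monoR0, monoR1, monoR2, monoR3, monoR4, monoR5, monoR6, monoR7, monoR8, monoR9, monoR10, monoR11, monoR12, monoR13, monoR14, monoR15, monoR16, monoR17, monoR18, monoR19, monoR20, monoR21, monoR22, monoR23, monoR24, monoR25, monoR26, monoR27, monoR28, monoR29, monoR30, monoR31, monoR32, monoR33, monoR34, monoR35, monoR36, monoR37, monoR38, monoR39, monoR40, monoR41, monoR42, monoR43, monoR44,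
    smul_add, coeff_add, coeff_smul, smul_eq_mul, coeff_tgt] at E22
  norm_num at E22
  have E23 : coeff (tgt 14 2) ((∑ n ∈ Finset.range 45, G n • monoN n) * Rsoc) = 0 :=
    psi_zero 14 2 (by norm_num) (by norm_num) _ hp
  simp only [Finset.sum_range_succ, Finset.sum_range_zero, zero_add, add_mul,
    smul_mul_assoc, monoR0, monoR1, monoR2, monoR3, monoR4, monoR5, monoR6, monoR7, monoR8, monoR9, monoR10, monoR11, monoR12, monoR13, monoR14, monoR15, monoR16, monoR17, monoR18, monoR19, monoR20, monoR21, monoR22, monoR23, monoR24, monoR25, monoR26, monoR27, monoR28, monoR29, monoR30, monoR31, monoR32, monoR33, monoR34, monoR35, monoR36, monoR37, monoR38, monoR39, monoR40, monoR41, monoR42, monoR43, monoR44,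
    smul_add, coeff_add, coeff_smul, smul_eq_mul, coeff_tgt] at E23
  norm_num at E23
  have E24 : coeff (tgt 13 8) ((∑ n ∈ Finset.range 45, G n • monoN n) * Rsoc) = 0 :=
    psi_zero 13 8 (by norm_num) (by norm_num) _ hp
  simp only [Finset.sum_range_succ, Finset.sum_range_zero, zero_add, add_mul,
    smul_mul_assoc, monoR0, monoR1, monoR2, monoR3, monoR4, monoR5, monoR6, monoR7, monoR8, monoR9, monoR10, monoR11, monoR12, monoR13, monoR14, monoR15, monoR16, monoR17, monoR18, monoR19, monoR20, monoR21, monoR22, monoR23, monoR24, monoR25, monoR26, monoR27, monoR28, monoR29, monoR30, monoR31, monoR32, monoR33, monoR34, monoR35, monoR36, monoR37, monoR38, monoR39, monoR40, monoR41, monoR42, monoR43, monoR44,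
    smul_add, coeff_add, coeff_smul, smul_eq_mul, coeff_tgt] at E24
  norm_num at E24
  have E25 : coeff (tgt 13 7) ((∑ n ∈ Finset.range 45, G n • monoN n) * Rsoc) = 0 :=
    psi_zero 13 7 (by norm_num) (by norm_num) _ hp
  simp only [Finset.sum_range_succ, Finset.sum_range_zero, zero_add, add_mul,
    smul_mul_assoc, monoR0, monoR1, monoR2, monoR3, monoR4, monoR5, monoR6, monoR7, monoR8, monoR9, monoR10, monoR11, monoR12, monoR13, monoR14, monoR15, monoR16, monoR17, monoR18, monoR19, monoR20, monoR21, monoR22, monoR23, monoR24, monoR25, monoR26, monoR27, monoR28, monoR29, monoR30, monoR31, monoR32, monoR33, monoR34, monoR35, monoR36, monoR37, monoR38, monoR39, monoR40, monoR41, monoR42, monoR43, monoR44,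
    smul_add, coeff_add, coeff_smul, smul_eq_mul, coeff_tgt] at E25
  norm_num at E25
  have E26 : coeff (tgt 13 6) ((∑ n ∈ Finset.range 45, G n • monoN n) * Rsoc) = 0 :=
    psi_zero 13 6 (by norm_num) (by norm_num) _ hp
  simp only [Finset.sum_range_succ, Finset.sum_range_zero, zero_add, add_mul,
    smul_mul_assoc, monoR0, monoR1, monoR2, monoR3, monoR4, monoR5, monoR6, monoR7, monoR8, monoR9, monoR10, monoR11, monoR12, monoR13, monoR14, monoR15, monoR16, monoR17, monoR18, monoR19, monoR20, monoR21, monoR22, monoR23, monoR24, monoR25, monoR26, monoR27, monoR28, monoR29, monoR30, monoR31, monoR32, monoR33, monoR34, monoR35, monoR36, monoR37, monoR38, monoR39, monoR40, monoR41, monoR42, monoR43, monoR44,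
    smul_add, coeff_add, coeff_smul, smul_eq_mul, coeff_tgt] at E26
  norm_num at E26
  have E27 : coeff (tgt 13 5) ((∑ n ∈ Finset.range 45, G n • monoN n) * Rsoc) = 0 :=
    psi_zero 13 5 (by norm_num) (by norm_num) _ hp
  simp only [Finset.sum_range_succ, Finset.sum_range_zero, zero_add, add_mul,
    smul_mul_assoc, monoR0, monoR1, monoR2, monoR3, monoR4, monoR5, monoR6, monoR7, monoR8, monoR9, monoR10, monoR11, monoR12, monoR13, monoR14, monoR15, monoR16, monoR17, monoR18, monoR19, monoR20, monoR21, monoR22, monoR23, monoR24, monoR25, monoR26, monoR27, monoR28, monoR29, monoR30, monoR31, monoR32, monoR33, monoR34, monoR35, monoR36, monoR37, monoR38, monoR39, monoR40, monoR41, monoR42, monoR43, monoR44,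
    smul_add, coeff_add, coeff_smul, smul_eq_mul, coeff_tgt] at E27
  norm_num at E27
  have E28 : coeff (tgt 13 4) ((∑ n ∈ Finset.range 45, G n • monoN n) * Rsoc) = 0 :=
    psi_zero 13 4 (by norm_num) (by norm_num) _ hp
  simp only [Finset.sum_range_succ, Finset.sum_range_zero, zero_add, add_mul,
    smul_mul_assoc, monoR0, monoR1, monoR2, monoR3, monoR4, monoR5, monoR6, monoR7, monoR8, monoR9, monoR10, monoR11, monoR12, monoR13, monoR14, monoR15, monoR16, monoR17, monoR18, monoR19, monoR20, monoR21, monoR22, monoR23, monoR24, monoR25, monoR26, monoR27, monoR28, monoR29, monoR30, monoR31, monoR32, monoR33, monoR34, monoR35, monoR36, monoR37, monoR38, monoR39, monoR40, monoR41, monoR42, monoR43, monoR44,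
    smul_add, coeff_add, coeff_smul, smul_eq_mul, coeff_tgt] at E28
  norm_num at E28
  have E29 : coeff (tgt 13 3) ((∑ n ∈ Finset.range 45, G n • monoN n) * Rsoc) = 0 :=
    psi_zero 13 3 (by norm_num) (by norm_num) _ hp
  simp only [Finset.sum_range_succ, Finset.sum_range_zero, zero_add, add_mul,
    smul_mul_assoc, monoR0, monoR1, monoR2, monoR3, monoR4, monoR5, monoR6, monoR7, monoR8, monoR9, monoR10, monoR11, monoR12, monoR13, monoR14, monoR15, monoR16, monoR17, monoR18, monoR19, monoR20, monoR21, monoR22, monoR23, monoR24, monoR25, monoR26, monoR27, monoR28, monoR29, monoR30, monoR31, monoR32, monoR33, monoR34, monoR35, monoR36, monoR37, monoR38, monoR39, monoR40, monoR41, monoR42, monoR43, monoR44,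
    smul_add, coeff_add, coeff_smul, smul_eq_mul, coeff_tgt] at E29
  norm_num at E29
  have E30 : coeff (tgt 12 8) ((∑ n ∈ Finset.range 45, G n • monoN n) * Rsoc) = 0 :=
    psi_zero 12 8 (by norm_num) (by norm_num) _ hp
  simp only [Finset.sum_range_succ, Finset.sum_range_zero, zero_add, add_mul,
    smul_mul_assoc, monoR0, monoR1, monoR2, monoR3, monoR4, monoR5, monoR6, monoR7, monoR8, monoR9, monoR10, monoR11, monoR12, monoR13, monoR14, monoR15, monoR16, monoR17, monoR18, monoR19, monoR20, monoR21, monoR22, monoR23, monoR24, monoR25, monoR26, monoR27, monoR28, monoR29, monoR30, monoR31, monoR32, monoR33, monoR34, monoR35, monoR36, monoR37, monoR38, monoR39, monoR40, monoR41, monoR42, monoR43, monoR44,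
    smul_add, coeff_add, coeff_smul, smul_eq_mul, coeff_tgt] at E30
  norm_num at E30
  have E31 : coeff (tgt 12 7) ((∑ n ∈ Finset.range 45, G n • monoN n) * Rsoc) = 0 :=
    psi_zero 12 7 (by norm_num) (by norm_num) _ hp
  simp only [Finset.sum_range_succ, Finset.sum_range_zero, zero_add, add_mul,
    smul_mul_assoc, monoR0, monoR1, monoR2, monoR3, monoR4, monoR5, monoR6, monoR7, monoR8, monoR9, monoR10, monoR11, monoR12, monoR13, monoR14, monoR15, monoR16, monoR17, monoR18, monoR19, monoR20, monoR21, monoR22, monoR23, monoR24, monoR25, monoR26, monoR27, monoR28, monoR29, monoR30, monoR31, monoR32, monoR33, monoR34, monoR35, monoR36, monoR37, monoR38, monoR39, monoR40, monoR41, monoR42, monoR43, monoR44,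
    smul_add, coeff_add, coeff_smul, smul_eq_mul, coeff_tgt] at E31
  norm_num at E31
  have E32 : coeff (tgt 12 6) ((∑ n ∈ Finset.range 45, G n • monoN n) * Rsoc) = 0 :=
    psi_zero 12 6 (by norm_num) (by norm_num) _ hp
  simp only [Finset.sum_range_succ, Finset.sum_range_zero, zero_add, add_mul,
    smul_mul_assoc, monoR0, monoR1, monoR2, monoR3, monoR4, monoR5, monoR6, monoR7, monoR8, monoR9, monoR10, monoR11, monoR12, monoR13, monoR14, monoR15, monoR16, monoR17, monoR18, monoR19, monoR20, monoR21, monoR22, monoR23, monoR24, monoR25, monoR26, monoR27, monoR28, monoR29, monoR30, monoR31, monoR32, monoR33, monoR34, monoR35, monoR36, monoR37, monoR38, monoR39, monoR40, monoR41, monoR42, monoR43, monoR44,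
    smul_add, coeff_add, coeff_smul, smul_eq_mul, coeff_tgt] at E32
  norm_num at E32
  have E33 : coeff (tgt 12 5) ((∑ n ∈ Finset.range 45, G n • monoN n) * Rsoc) = 0 :=
    psi_zero 12 5 (by norm_num) (by norm_num) _ hp
  simp only [Finset.sum_range_succ, Finset.sum_range_zero, zero_add, add_mul,
    smul_mul_assoc, monoR0, monoR1, monoR2, monoR3, monoR4, monoR5, monoR6, monoR7, monoR8, monoR9, monoR10, monoR11, monoR12, monoR13, monoR14, monoR15, monoR16, monoR17, monoR18, monoR19, monoR20, monoR21, monoR22, monoR23, monoR24, monoR25, monoR26, monoR27, monoR28, monoR29, monoR30, monoR31, monoR32, monoR33, monoR34, monoR35, monoR36, monoR37, monoR38, monoR39, monoR40, monoR41, monoR42, monoR43, monoR44,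
    smul_add, coeff_add, coeff_smul, smul_eq_mul, coeff_tgt] at E33
  norm_num at E33
  have E34 : coeff (tgt 12 4) ((∑ n ∈ Finset.range 45, G n • monoN n) * Rsoc) = 0 :=
    psi_zero 12 4 (by norm_num) (by norm_num) _ hp
  simp only [Finset.sum_range_succ, Finset.sum_range_zero, zero_add, add_mul,
    smul_mul_assoc, monoR0, monoR1, monoR2, monoR3, monoR4, monoR5, monoR6, monoR7, monoR8, monoR9, monoR10, monoR11, monoR12, monoR13, monoR14, monoR15, monoR16, monoR17, monoR18, monoR19, monoR20, monoR21, monoR22, monoR23, monoR24, monoR25, monoR26, monoR27, monoR28, monoR29, monoR30, monoR31, monoR32, monoR33, monoR34, monoR35, monoR36, monoR37, monoR38, monoR39, monoR40, monoR41, monoR42, monoR43, monoR44,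
    smul_add, coeff_add, coeff_smul, smul_eq_mul, coeff_tgt] at E34
  norm_num at E34
  have E35 : coeff (tgt 11 8) ((∑ n ∈ Finset.range 45, G n • monoN n) * Rsoc) = 0 :=
    psi_zero 11 8 (by norm_num) (by norm_num) _ hp
  simp only [Finset.sum_range_succ, Finset.sum_range_zero, zero_add, add_mul,
    smul_mul_assoc, monoR0, monoR1, monoR2, monoR3, monoR4, monoR5, monoR6, monoR7, monoR8, monoR9, monoR10, monoR11, monoR12, monoR13, monoR14, monoR15, monoR16, monoR17, monoR18, monoR19, monoR20, monoR21, monoR22, monoR23, monoR24, monoR25, monoR26, monoR27, monoR28, monoR29, monoR30, monoR31, monoR32, monoR33, monoR34, monoR35, monoR36, monoR37, monoR38, monoR39, monoR40, monoR41, monoR42, monoR43, monoR44,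
    smul_add, coeff_add, coeff_smul, smul_eq_mul, coeff_tgt] at E35
  norm_num at E35
  have E36 : coeff (tgt 11 7) ((∑ n ∈ Finset.range 45, G n • monoN n) * Rsoc) = 0 :=
    psi_zero 11 7 (by norm_num) (by norm_num) _ hp
  simp only [Finset.sum_range_succ, Finset.sum_range_zero, zero_add, add_mul,
    smul_mul_assoc, monoR0, monoR1, monoR2, monoR3, monoR4, monoR5, monoR6, monoR7, monoR8, monoR9, monoR10, monoR11, monoR12, monoR13, monoR14, monoR15, monoR16, monoR17, monoR18, monoR19, monoR20, monoR21, monoR22, monoR23, monoR24, monoR25, monoR26, monoR27, monoR28, monoR29, monoR30, monoR31, monoR32, monoR33, monoR34, monoR35, monoR36, monoR37, monoR38, monoR39, monoR40, monoR41, monoR42, monoR43, monoR44,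
    smul_add, coeff_add, coeff_smul, smul_eq_mul, coeff_tgt] at E36
  norm_num at E36
  have E37 : coeff (tgt 11 6) ((∑ n ∈ Finset.range 45, G n • monoN n) * Rsoc) = 0 :=
    psi_zero 11 6 (by norm_num) (by norm_num) _ hp
  simp only [Finset.sum_range_succ, Finset.sum_range_zero, zero_add, add_mul,
    smul_mul_assoc, monoR0, monoR1, monoR2, monoR3, monoR4, monoR5, monoR6, monoR7, monoR8, monoR9, monoR10, monoR11, monoR12, monoR13, monoR14, monoR15, monoR16, monoR17, monoR18, monoR19, monoR20, monoR21, monoR22, monoR23, monoR24, monoR25, monoR26, monoR27, monoR28, monoR29, monoR30, monoR31, monoR32, monoR33, monoR34, monoR35, monoR36, monoR37, monoR38, monoR39, monoR40, monoR41, monoR42, monoR43, monoR44,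
    smul_add, coeff_add, coeff_smul, smul_eq_mul, coeff_tgt] at E37
  norm_num at E37
  have E38 : coeff (tgt 11 5) ((∑ n ∈ Finset.range 45, G n • monoN n) * Rsoc) = 0 :=
    psi_zero 11 5 (by norm_num) (by norm_num) _ hp
  simp only [Finset.sum_range_succ, Finset.sum_range_zero, zero_add, add_mul,
    smul_mul_assoc, monoR0, monoR1, monoR2, monoR3, monoR4, monoR5, monoR6, monoR7, monoR8, monoR9, monoR10, monoR11, monoR12, monoR13, monoR14, monoR15, monoR16, monoR17, monoR18, monoR19, monoR20, monoR21, monoR22, monoR23, monoR24, monoR25, monoR26, monoR27, monoR28, monoR29, monoR30, monoR31, monoR32, monoR33, monoR34, monoR35, monoR36, monoR37, monoR38, monoR39, monoR40, monoR41, monoR42, monoR43, monoR44,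
    smul_add, coeff_add, coeff_smul, smul_eq_mul, coeff_tgt] at E38
  norm_num at E38
  have E39 : coeff (tgt 10 8) ((∑ n ∈ Finset.range 45, G n • monoN n) * Rsoc) = 0 :=
    psi_zero 10 8 (by norm_num) (by norm_num) _ hp
  simp only [Finset.sum_range_succ, Finset.sum_range_zero, zero_add, add_mul,
    smul_mul_assoc, monoR0, monoR1, monoR2, monoR3, monoR4, monoR5, monoR6, monoR7, monoR8, monoR9, monoR10, monoR11, monoR12, monoR13, monoR14, monoR15, monoR16, monoR17, monoR18, monoR19, monoR20, monoR21, monoR22, monoR23, monoR24, monoR25, monoR26, monoR27, monoR28, monoR29, monoR30, monoR31, monoR32, monoR33, monoR34, monoR35, monoR36, monoR37, monoR38, monoR39, monoR40, monoR41, monoR42, monoR43, monoR44,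
    smul_add, coeff_add, coeff_smul, smul_eq_mul, coeff_tgt] at E39
  norm_num at E39
  have E40 : coeff (tgt 10 7) ((∑ n ∈ Finset.range 45, G n • monoN n) * Rsoc) = 0 :=
    psi_zero 10 7 (by norm_num) (by norm_num) _ hp
  simp only [Finset.sum_range_succ, Finset.sum_range_zero, zero_add, add_mul,
    smul_mul_assoc, monoR0, monoR1, monoR2, monoR3, monoR4, monoR5, monoR6, monoR7, monoR8, monoR9, monoR10, monoR11, monoR12, monoR13, monoR14, monoR15, monoR16, monoR17, monoR18, monoR19, monoR20, monoR21, monoR22, monoR23, monoR24, monoR25, monoR26, monoR27, monoR28, monoR29, monoR30, monoR31, monoR32, monoR33, monoR34, monoR35, monoR36, monoR37, monoR38, monoR39, monoR40, monoR41, monoR42, monoR43, monoR44,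
    smul_add, coeff_add, coeff_smul, smul_eq_mul, coeff_tgt] at E40
  norm_num at E40
  have E41 : coeff (tgt 10 6) ((∑ n ∈ Finset.range 45, G n • monoN n) * Rsoc) = 0 :=
    psi_zero 10 6 (by norm_num) (by norm_num) _ hp
  simp only [Finset.sum_range_succ, Finset.sum_range_zero, zero_add, add_mul,
    smul_mul_assoc, monoR0, monoR1, monoR2, monoR3, monoR4, monoR5, monoR6, monoR7, monoR8, monoR9, monoR10, monoR11, monoR12, monoR13, monoR14, monoR15, monoR16, monoR17, monoR18, monoR19, monoR20, monoR21, monoR22, monoR23, monoR24, monoR25, monoR26, monoR27, monoR28, monoR29, monoR30, monoR31, monoR32, monoR33, monoR34, monoR35, monoR36, monoR37, monoR38, monoR39, monoR40, monoR41, monoR42, monoR43, monoR44,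
    smul_add, coeff_add, coeff_smul, smul_eq_mul, coeff_tgt] at E41
  norm_num at E41
  have E42 : coeff (tgt 9 8) ((∑ n ∈ Finset.range 45, G n • monoN n) * Rsoc) = 0 :=
    psi_zero 9 8 (by norm_num) (by norm_num) _ hp
  simp only [Finset.sum_range_succ, Finset.sum_range_zero, zero_add, add_mul,
    smul_mul_assoc, monoR0, monoR1, monoR2, monoR3, monoR4, monoR5, monoR6, monoR7, monoR8, monoR9, monoR10, monoR11, monoR12, monoR13, monoR14, monoR15, monoR16, monoR17, monoR18, monoR19, monoR20, monoR21, monoR22, monoR23, monoR24, monoR25, monoR26, monoR27, monoR28, monoR29, monoR30, monoR31, monoR32, monoR33, monoR34, monoR35, monoR36, monoR37, monoR38, monoR39, monoR40, monoR41, monoR42, monoR43, monoR44,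
    smul_add, coeff_add, coeff_smul, smul_eq_mul, coeff_tgt] at E42
  norm_num at E42
  have E43 : coeff (tgt 9 7) ((∑ n ∈ Finset.range 45, G n • monoN n) * Rsoc) = 0 :=
    psi_zero 9 7 (by norm_num) (by norm_num) _ hp
  simp only [Finset.sum_range_succ, Finset.sum_range_zero, zero_add, add_mul,
    smul_mul_assoc, monoR0, monoR1, monoR2, monoR3, monoR4, monoR5, monoR6, monoR7, monoR8, monoR9, monoR10, monoR11, monoR12, monoR13, monoR14, monoR15, monoR16, monoR17, monoR18, monoR19, monoR20, monoR21, monoR22, monoR23, monoR24, monoR25, monoR26, monoR27, monoR28, monoR29, monoR30, monoR31, monoR32, monoR33, monoR34, monoR35, monoR36, monoR37, monoR38, monoR39, monoR40, monoR41, monoR42, monoR43, monoR44,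
    smul_add, coeff_add, coeff_smul, smul_eq_mul, coeff_tgt] at E43
  norm_num at E43
  have E44 : coeff (tgt 8 8) ((∑ n ∈ Finset.range 45, G n • monoN n) * Rsoc) = 0 :=
    psi_zero 8 8 (by norm_num) (by norm_num) _ hp
  simp only [Finset.sum_range_succ, Finset.sum_range_zero, zero_add, add_mul,
    smul_mul_assoc, monoR0, monoR1, monoR2, monoR3, monoR4, monoR5, monoR6, monoR7, monoR8, monoR9, monoR10, monoR11, monoR12, monoR13, monoR14, monoR15, monoR16, monoR17, monoR18, monoR19, monoR20, monoR21, monoR22, monoR23, monoR24, monoR25, monoR26, monoR27, monoR28, monoR29, monoR30, monoR31, monoR32, monoR33, monoR34, monoR35, monoR36, monoR37, monoR38, monoR39, monoR40, monoR41, monoR42, monoR43, monoR44,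
    smul_add, coeff_add, coeff_smul, smul_eq_mul, coeff_tgt] at E44
  norm_num at E44
  have hGall : ∀ m : ℕ, m < 45 → G m = 0 := by
    intro m hm
    interval_cases m
    · first
        | exact E8
        | linear_combination (1/5430036927411:ℚ) * E8
        | linear_combination E8
    · linear_combination (-218474248/137392580427227034525:ℚ) * E23 + (33846383/137392580427227034525:ℚ) * E7
    · linear_combination (49766413/15253633738740196800:ℚ) * E34 + (-373961/128181796123867200:ℚ) * E22 + (1061989/3813408434685049200:ℚ) * E6
    · linear_combination (-22567/11841918216448320:ℚ) * E41 + (12739/1903165427643480:ℚ) * E33 + (-41137/10875231015105600:ℚ) * E21 + (39367/133221579935043600:ℚ) * E5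
    · linear_combination (1/4705319619000:ℚ) * E44 + (-691/203269807540800:ℚ) * E40 + (691/81670904815500:ℚ) * E32 + (-691/166311660715200:ℚ) * E20 + (691/2286785334834000:ℚ) * E4
    · linear_combination (-22567/11841918216448320:ℚ) * E39 + (12739/1903165427643480:ℚ) * E31 + (-41137/10875231015105600:ℚ) * E19 + (39367/133221579935043600:ℚ) * E3
    · linear_combination (49766413/15253633738740196800:ℚ) * E30 + (-373961/128181796123867200:ℚ) * E18 + (1061989/3813408434685049200:ℚ) * E2
    · linear_combination (-218474248/137392580427227034525:ℚ) * E17 + (33846383/137392580427227034525:ℚ) * E1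
    · first
        | exact E0
        | linear_combination (1/5430036927411:ℚ) * E0
        | linear_combination E0
    · first
        | exact E16
        | linear_combination (1/212356969056:ℚ) * E16
        | linear_combination E16
    · linear_combination (-33846383/1353469190520100500:ℚ) * E29 + (11617093/1353469190520100500:ℚ) * E15
    · linear_combination (1061989/34042224465849600:ℚ) * E38 + (-2455819/46421215180704000:ℚ) * E28 + (205093/18236905963848000:ℚ) * E14
    · linear_combination (-39367/4181550326553600:ℚ) * E43 + (3455/53762789912832:ℚ) * E37 + (-384887/5376278991283200:ℚ) * E27 + (119543/9408488234745600:ℚ) * E13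
    · linear_combination (-39367/4181550326553600:ℚ) * E42 + (3455/53762789912832:ℚ) * E36 + (-384887/5376278991283200:ℚ) * E26 + (119543/9408488234745600:ℚ) * E12
    · linear_combination (1061989/34042224465849600:ℚ) * E35 + (-2455819/46421215180704000:ℚ) * E25 + (205093/18236905963848000:ℚ) * E11
    · linear_combination (-33846383/1353469190520100500:ℚ) * E24 + (11617093/1353469190520100500:ℚ) * E10
    · first
        | exact E9
        | linear_combination (1/212356969056:ℚ) * E9
        | linear_combination E9
    · linear_combination (22345830977/549570321708908138100:ℚ) * E23 + (-218474248/137392580427227034525:ℚ) * E7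
    · linear_combination (-41103711923/305072674774803936000:ℚ) * E34 + (29126138513/305072674774803936000:ℚ) * E22 + (-373961/128181796123867200:ℚ) * E6
    · linear_combination (234229/2416718003356800:ℚ) * E41 + (-3766489/12180258736918272:ℚ) * E33 + (42471277/304506468422956800:ℚ) * E21 + (-41137/10875231015105600:ℚ) * E5
    · linear_combination (-1607/135513205027200:ℚ) * E44 + (219859/1219618845244800:ℚ) * E40 + (-426347/1045387581638400:ℚ) * E32 + (1172627/7317713071468800:ℚ) * E20 + (-691/166311660715200:ℚ) * E4
    · linear_combination (234229/2416718003356800:ℚ) * E39 + (-3766489/12180258736918272:ℚ) * E31 + (42471277/304506468422956800:ℚ) * E19 + (-41137/10875231015105600:ℚ) * E3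
    · linear_combination (-41103711923/305072674774803936000:ℚ) * E30 + (29126138513/305072674774803936000:ℚ) * E18 + (-373961/128181796123867200:ℚ) * E2
    · linear_combination (22345830977/549570321708908138100:ℚ) * E17 + (-218474248/137392580427227034525:ℚ) * E1
    · linear_combination (54618562/338367297630025125:ℚ) * E29 + (-33846383/1353469190520100500:ℚ) * E15
    · linear_combination (-373961/1144276452633600:ℚ) * E38 + (926601451/2042533467950976000:ℚ) * E28 + (-2455819/46421215180704000:ℚ) * E14
    · linear_combination (41137/341351047065600:ℚ) * E43 + (-576107/768039855897600:ℚ) * E37 + (14900033/21505115965132800:ℚ) * E27 + (-384887/5376278991283200:ℚ) * E13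
    · linear_combination (41137/341351047065600:ℚ) * E42 + (-576107/768039855897600:ℚ) * E36 + (14900033/21505115965132800:ℚ) * E26 + (-384887/5376278991283200:ℚ) * E12
    · linear_combination (-373961/1144276452633600:ℚ) * E35 + (926601451/2042533467950976000:ℚ) * E25 + (-2455819/46421215180704000:ℚ) * E11
    · linear_combination (54618562/338367297630025125:ℚ) * E24 + (-33846383/1353469190520100500:ℚ) * E10
    · linear_combination (14433883679/43581810682114848000:ℚ) * E34 + (-41103711923/305072674774803936000:ℚ) * E22 + (49766413/15253633738740196800:ℚ) * E6
    · linear_combination (-52015049/135336208187980800:ℚ) * E41 + (178032493/174003696241689600:ℚ) * E33 + (-3766489/12180258736918272:ℚ) * E21 + (12739/1903165427643480:ℚ) * E5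
    · linear_combination (21799/387180585792000:ℚ) * E44 + (-1087283/1393850108851200:ℚ) * E40 + (4454299/2986821661824000:ℚ) * E32 + (-426347/1045387581638400:ℚ) * E20 + (691/81670904815500:ℚ) * E4
    · linear_combination (-52015049/135336208187980800:ℚ) * E39 + (178032493/174003696241689600:ℚ) * E31 + (-3766489/12180258736918272:ℚ) * E19 + (12739/1903165427643480:ℚ) * E3
    · linear_combination (14433883679/43581810682114848000:ℚ) * E30 + (-41103711923/305072674774803936000:ℚ) * E18 + (49766413/15253633738740196800:ℚ) * E2
    · linear_combination (49766413/136168897863398400:ℚ) * E38 + (-373961/1144276452633600:ℚ) * E28 + (1061989/34042224465849600:ℚ) * E14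
    · linear_combination (-12739/59736433236480:ℚ) * E43 + (5991929/5376278991283200:ℚ) * E37 + (-576107/768039855897600:ℚ) * E27 + (3455/53762789912832:ℚ) * E13
    · linear_combination (-12739/59736433236480:ℚ) * E42 + (5991929/5376278991283200:ℚ) * E36 + (-576107/768039855897600:ℚ) * E26 + (3455/53762789912832:ℚ) * E12
    · linear_combination (49766413/136168897863398400:ℚ) * E35 + (-373961/1144276452633600:ℚ) * E25 + (1061989/34042224465849600:ℚ) * E11
    · linear_combination (499349/2339144339051520:ℚ) * E41 + (-52015049/135336208187980800:ℚ) * E33 + (234229/2416718003356800:ℚ) * E21 + (-22567/11841918216448320:ℚ) * E5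
    · linear_combination (-6449/135513205027200:ℚ) * E44 + (1069279/1951390152391680:ℚ) * E40 + (-1087283/1393850108851200:ℚ) * E32 + (219859/1219618845244800:ℚ) * E20 + (-691/203269807540800:ℚ) * E4
    · linear_combination (499349/2339144339051520:ℚ) * E39 + (-52015049/135336208187980800:ℚ) * E31 + (234229/2416718003356800:ℚ) * E19 + (-22567/11841918216448320:ℚ) * E3
    · linear_combination (22567/371693362360320:ℚ) * E43 + (-12739/59736433236480:ℚ) * E37 + (41137/341351047065600:ℚ) * E27 + (-39367/4181550326553600:ℚ) * E13
    · linear_combination (22567/371693362360320:ℚ) * E42 + (-12739/59736433236480:ℚ) * E36 + (41137/341351047065600:ℚ) * E26 + (-39367/4181550326553600:ℚ) * E12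
    · linear_combination (2039/301140455616000:ℚ) * E44 + (-6449/135513205027200:ℚ) * E40 + (21799/387180585792000:ℚ) * E32 + (-1607/135513205027200:ℚ) * E20 + (1/4705319619000:ℚ) * E4
  intro i
  have hgi : g i = G i.val := by simp [hG]
  rw [hgi]
  exact hGall i.val i.isLt

lemma dim45 : Module.finrank ℚ (P2 ⧸ Isp) = 45 := by
  let b : Module.Basis (Fin 45) ℚ (P2 ⧸ Isp) := Module.Basis.mk indep span_top
  rw [Module.finrank_eq_card_basis b, Fintype.card_fin]

end


/-- If the image of the product `P₂` in `R = ℚ[a,c][z]/(z² + c)` equals `q₀ + q₁·z` with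
`q₀, q₁ ∈ ℚ[a,c]`, then `ℚ[a,c]/(q₀, q₁)` is a 45-dimensional `ℚ`-vector space. -/
theorem stmt_4 (q₀ q₁ : MvPolynomial (Fin 2) ℚ)
    (h : Ideal.Quotient.mk Irel (prodP 2) =
      Ideal.Quotient.mk Irel (Polynomial.C q₀ + Polynomial.C q₁ * Polynomial.X)) :
    Module.finrank ℚ (MvPolynomial (Fin 2) ℚ ⧸ Ideal.span {q₀, q₁}) = 45 := by
  obtain ⟨hA, hB⟩ := extract q₀ q₁ h
  rw [hA, hB, show Ideal.span {QA, QB} = Isp from rfl]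
  exact dim45
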